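/- arXiv:2306.03884 — 2 statements merged into one kernel-verified Lean document; each statement's English description precedes it below -/
import Mathlib

section
/- If n ≥ 4 and m > n, then there is no optimal (n,m)-graph: for every connected finite loopless multigraph G with n vertices and m edges and distinct terminals s,t, there exist a connected finite loopless multigraph H with n vertices and m edges, distinct terminals s',t' of H, and some p ∈ (0,1) with sRel(H,s',t';p) > sRel(G,s,t;p). -/
/-- A finite loopless multigraph: a finite vertex type `V`, a finite edge type `E`,
and an endpoint map assigning to each edge an unordered pair of distinct vertices. -/
structure Multigraph where
  V : Type
  E : Type
  [fintV : Fintype V]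
  [fintE : Fintype E]
  [decV : DecidableEq V]
  [decE : DecidableEq E]
  ends : E → Sym2 V
  loopless : ∀ e, ¬ (ends e).IsDiag

attribute [instance] Multigraph.fintV Multigraph.fintE Multigraph.decV Multigraph.decE

namespace Multigraph

/-- The simple graph on `G.V` underlying the spanning subgraph of `G` with edge set `E'`. -/
def subgraph (G : Multigraph) (E' : Finset G.E) : SimpleGraph G.V where
  Adj u v := u ≠ v ∧ ∃ e ∈ E', G.ends e = s(u, v)
  symm := ⟨by
    rintro u v ⟨huv, e, he, hends⟩
    exact ⟨huv.symm, e, he, hends.trans (Sym2.eq_swap)⟩⟩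
  loopless := ⟨by rintro u ⟨h, -⟩; exact h rfl⟩

/-- The spanning subgraph of `G` with edge set `E'` has exactly two connected components,
one containing `s` and the other containing `t`. -/
def SplitState (G : Multigraph) (s t : G.V) (E' : Finset G.E) : Prop :=
  ¬ (G.subgraph E').Reachable s t ∧
    ∀ v : G.V, (G.subgraph E').Reachable v s ∨ (G.subgraph E').Reachable v t

open scoped Classical in
/-- The split reliability of `G` with terminals `s` and `t`, at edge probability `p`. -/
noncomputable def sRel (G : Multigraph) (s t : G.V) (p : ℝ) : ℝ :=
  ∑ E' : Finset G.E, if G.SplitState s t E' then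
    p ^ E'.card * (1 - p) ^ (Fintype.card G.E - E'.card) else 0

open scoped Classical in
/-- `N_i(G,s,t)`: the number of edge subsets of cardinality `i` whose spanning subgraph has
exactly two connected components, one containing `s` and the other containing `t`. -/
noncomputable def Nst (G : Multigraph) (s t : G.V) (i : ℕ) : ℕ :=
  (Finset.univ.filter fun E' : Finset G.E => E'.card = i ∧ G.SplitState s t E').card

/-- A multigraph is connected when its underlying simple graph is. -/
def Connected (G : Multigraph) : Prop := (G.subgraph Finset.univ).Connected

open scoped Classical in
/-- The all-terminal reliability of `G` at edge probability `p`. -/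
noncomputable def Rel (G : Multigraph) (p : ℝ) : ℝ :=
  ∑ E' : Finset G.E, if (G.subgraph E').Connected then
    p ^ E'.card * (1 - p) ^ (Fintype.card G.E - E'.card) else 0

/-- `G` together with terminals `s ≠ t` is an optimal `(n,m)`-graph for split reliability. -/
def IsOptimal (n m : ℕ) (G : Multigraph) (s t : G.V) : Prop :=
  G.Connected ∧ Fintype.card G.V = n ∧ Fintype.card G.E = m ∧ s ≠ t ∧
    ∀ (H : Multigraph) (s' t' : H.V), H.Connected → Fintype.card H.V = n →
      Fintype.card H.E = m → s' ≠ t' → ∀ p : ℝ, 0 < p → p < 1 →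
        H.sRel s' t' p ≤ G.sRel s t p

/-- An isomorphism of multigraphs taking terminals `s,t` of `G` to terminals `u,v` of `H`. -/
def IsoTerm (G H : Multigraph) (s t : G.V) (u v : H.V) : Prop :=
  ∃ (φ : G.V ≃ H.V) (ψ : G.E ≃ H.E),
    (∀ e, H.ends (ψ e) = (G.ends e).map φ) ∧ φ s = u ∧ φ t = v

end Multigraph

namespace Multigraph

/-- `Gnm n m k`: the multigraph obtained from a path `v_0, v_1, …, v_{n-1}` (terminals
`s = v_0`, `t = v_{n-1}`) by replacing the path edge from `v_k` to `v_{k+1}` by a bundle of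
`m - n + 2` parallel edges (so that the graph has `m` edges in total when `m ≥ n - 1`). -/
def Gnm (n m k : ℕ) (hk : k < n - 1) : Multigraph where
  V := Fin n
  E := Fin m
  ends e :=
    if h : e.val < n - 1 then
      s((⟨e.val, by omega⟩ : Fin n), (⟨e.val + 1, by omega⟩ : Fin n))
    else
      s((⟨k, by omega⟩ : Fin n), (⟨k + 1, by omega⟩ : Fin n))
  loopless e := by
    by_cases h : e.val < n - 1 <;>
      simp [h, Sym2.mk_isDiag_iff, Fin.ext_iff]

/-- The cycle on `n ≥ 2` vertices. -/
def cycleGraph (n : ℕ) (hn : 2 ≤ n) : Multigraph where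
  V := Fin n
  E := Fin n
  ends e := s(e, (⟨(e.val + 1) % n, Nat.mod_lt _ (by omega)⟩ : Fin n))
  loopless e := by
    simp only [Sym2.mk_isDiag_iff, Fin.ext_iff, Fin.val_mk]
    intro hc
    rcases Nat.lt_or_ge (e.val + 1) n with h' | h'
    · rw [Nat.mod_eq_of_lt h'] at hc; omega
    · have he : e.val + 1 = n := by have := e.isLt; omega
      rw [he, Nat.mod_self] at hc
      omega

/-- The multigraph obtained from `G` by adjoining a new vertex (`none`) joined by a single
new edge to the vertex `u` of `G`. -/
def addPendant (G : Multigraph) (u : G.V) : Multigraph where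
  V := Option G.V
  E := Option G.E
  ends e := e.elim s(some u, none) (fun e' => (G.ends e').map some)
  loopless e := by
    cases e with
    | none => simp [Sym2.mk_isDiag_iff]
    | some e' =>
        show ¬ ((G.ends e').map some).IsDiag
        rw [Sym2.isDiag_map (Option.some_injective _)]
        exact G.loopless e'

/-- The disjoint union of two multigraphs. -/
def disjSum (A B : Multigraph) : Multigraph where
  V := A.V ⊕ B.V
  E := A.E ⊕ B.E
  ends := Sum.elim (fun e => (A.ends e).map Sum.inl) (fun e => (B.ends e).map Sum.inr)
  loopless e := by
    cases e with
    | inl e =>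
        show ¬ ((A.ends e).map Sum.inl).IsDiag
        rw [Sym2.isDiag_map Sum.inl_injective]
        exact A.loopless e
    | inr e =>
        show ¬ ((B.ends e).map Sum.inr).IsDiag
        rw [Sym2.isDiag_map Sum.inr_injective]
        exact B.loopless e

/-- The multigraph on three vertices `0, 1, 2` with a bundle of `a` parallel edges between
`0` and `1` and a bundle of `b` parallel edges between `1` and `2`. -/
def doubleBundle (a b : ℕ) : Multigraph where
  V := Fin 3
  E := Fin (a + b)
  ends e := if e.val < a then s((0 : Fin 3), (1 : Fin 3)) else s((1 : Fin 3), (2 : Fin 3))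
  loopless e := by
    by_cases h : e.val < a <;> simp [h, Sym2.mk_isDiag_iff]

/-- The multigraph on three vertices `0, 1, 2` with bundles of `a`, `b`, `c` parallel edges
between `0,1`, between `1,2`, and between `2,0` respectively. -/
def tripleBundle (a b c : ℕ) : Multigraph where
  V := Fin 3
  E := Fin (a + b + c)
  ends e :=
    if e.val < a then s((0 : Fin 3), (1 : Fin 3))
    else if e.val < a + b then s((1 : Fin 3), (2 : Fin 3))
    else s((2 : Fin 3), (0 : Fin 3))
  loopless e := by
    by_cases h : e.val < a
    · simp [h, Sym2.mk_isDiag_iff]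
    · by_cases h' : e.val < a + b <;> simp [h, h', Sym2.mk_isDiag_iff]

/-- The multigraph obtained from a path `v_0, …, v_{n-1}` by replacing the path edge at
position `k₁` by a bundle of `2` parallel edges and the path edge at position `k₂` by a
bundle of `m - n + 1` parallel edges (for `m ≥ n`, `k₁ ≠ k₂`, the graph has `m` edges). -/
def Gnm2 (n m k₁ k₂ : ℕ) (hk₁ : k₁ < n - 1) (hk₂ : k₂ < n - 1) : Multigraph where
  V := Fin n
  E := Fin m
  ends e :=
    if h : e.val < n - 1 then
      s((⟨e.val, by omega⟩ : Fin n), (⟨e.val + 1, by omega⟩ : Fin n))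
    else if e.val = n - 1 then
      s((⟨k₁, by omega⟩ : Fin n), (⟨k₁ + 1, by omega⟩ : Fin n))
    else
      s((⟨k₂, by omega⟩ : Fin n), (⟨k₂ + 1, by omega⟩ : Fin n))
  loopless e := by
    by_cases h : e.val < n - 1
    · simp [h, Sym2.mk_isDiag_iff, Fin.ext_iff]
    · by_cases h' : e.val = n - 1 <;> simp [h, h', Sym2.mk_isDiag_iff, Fin.ext_iff]

/-- The simple graph on `n ≥ 4` vertices consisting of a path `s = v_0, …, v_{n-3} = t` of
length `n - 3` together with two further vertices `v_{n-2}, v_{n-1}` forming a triangle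
with `t`. It has `n` vertices and `n` edges. -/
def triGraph (n : ℕ) (hn : 4 ≤ n) : Multigraph where
  V := Fin n
  E := Fin n
  ends e :=
    if h : e.val < n - 3 then
      s((⟨e.val, by omega⟩ : Fin n), (⟨e.val + 1, by omega⟩ : Fin n))
    else if e.val = n - 3 then
      s((⟨n - 3, by omega⟩ : Fin n), (⟨n - 2, by omega⟩ : Fin n))
    else if e.val = n - 2 then
      s((⟨n - 2, by omega⟩ : Fin n), (⟨n - 1, by omega⟩ : Fin n))
    else
      s((⟨n - 1, by omega⟩ : Fin n), (⟨n - 3, by omega⟩ : Fin n))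
  loopless e := by
    by_cases h : e.val < n - 3
    · simp [h, Sym2.mk_isDiag_iff, Fin.ext_iff]
    · by_cases h' : e.val = n - 3
      · simp only [dif_neg h, if_pos h', Sym2.mk_isDiag_iff, Fin.mk.injEq]; omega
      · by_cases h'' : e.val = n - 2
        · simp only [dif_neg h, if_neg h', if_pos h'', Sym2.mk_isDiag_iff, Fin.mk.injEq]; omega
        · simp only [dif_neg h, if_neg h', if_neg h'', Sym2.mk_isDiag_iff, Fin.mk.injEq]; omega

end Multigraph

set_option linter.unusedSectionVars false

namespace SRelProof

open Finset SimpleGraph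
open scoped Classical

variable {V : Type}

/-- closure of a set under adjacency propagates along reachability -/
lemma reach_closed (A : SimpleGraph V) (S : Set V)
    (hS : ∀ u v, u ∈ S → A.Adj u v → v ∈ S) :
    ∀ u v, A.Reachable u v → u ∈ S → v ∈ S := by
  intro u v ⟨w⟩ hu
  induction w with
  | nil => exact hu
  | cons h p ih => exact ih (hS _ _ hu h)

lemma reach_transfer_aux (A B : SimpleGraph V) (t : V) (S : Set V)
    (hv : ∀ v, A.Reachable v t → v ∉ S)
    (hAB : ∀ u v, u ∉ S → v ∉ S → A.Adj u v → B.Adj u v) :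
    ∀ {u c : V}, A.Walk u c → A.Reachable c t → B.Reachable u c := by
  intro u c w
  induction w with
  | nil => exact fun _ => Reachable.refl _
  | @cons a b c h p ih =>
      intro hct
      have hb : A.Reachable b t := (Reachable.trans ⟨p⟩ hct)
      have ha : A.Reachable a t := (Adj.reachable h).trans hb
      exact (Adj.reachable (hAB _ _ (hv _ ha) (hv _ hb) h)).trans (ih hct)

/-- transfer reachability-to-t from graph A to graph B -/
lemma reach_transfer (A B : SimpleGraph V) (t : V) (S : Set V)
    (hv : ∀ v, A.Reachable v t → v ∉ S)
    (hAB : ∀ u v, u ∉ S → v ∉ S → A.Adj u v → B.Adj u v) :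
    ∀ v, A.Reachable v t → B.Reachable v t := by
  intro v ⟨w⟩
  exact reach_transfer_aux A B t S hv hAB w (Reachable.refl _)

variable [Fintype V]

/-- number of connected components, as a Finset card -/
noncomputable def ncomp (A : SimpleGraph V) : ℕ :=
  (Finset.univ.image A.connectedComponentMk).card

lemma ncomp_eq_card (A : SimpleGraph V) (h : ∀ u v, ¬ A.Adj u v) :
    ncomp A = Fintype.card V := by
  rw [ncomp, Finset.card_image_of_injective _ ?_, Finset.card_univ]
  intro u v huv
  rcases (ConnectedComponent.eq.1 huv) with ⟨w⟩
  cases w with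
  | nil => rfl
  | cons hadj _ => exact absurd hadj (h _ _)

lemma reach_insert_aux (A A' : SimpleGraph V) (x y : V)
    (hstep : ∀ u v, A'.Adj u v → A.Adj u v ∨ s(u, v) = s(x, y)) :
    ∀ {u v : V}, A'.Walk u v →
      A.Reachable u v ∨ (A.Reachable u x ∧ A.Reachable y v) ∨
        (A.Reachable u y ∧ A.Reachable x v) := by
  intro u v w
  induction w with
  | nil => exact Or.inl (Reachable.refl _)
  | @cons a b c h p ih =>
      rcases hstep _ _ h with hab | hxy
      · rcases ih with h1 | ⟨h1, h2⟩ | ⟨h1, h2⟩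
        · exact Or.inl ((hab.reachable).trans h1)
        · exact Or.inr (Or.inl ⟨(hab.reachable).trans h1, h2⟩)
        · exact Or.inr (Or.inr ⟨(hab.reachable).trans h1, h2⟩)
      · rw [Sym2.eq_iff] at hxy
        rcases hxy with ⟨rfl, rfl⟩ | ⟨rfl, rfl⟩
        · rcases ih with h1 | ⟨h1, h2⟩ | ⟨h1, h2⟩
          · exact Or.inr (Or.inl ⟨Reachable.refl _, h1⟩)
          · exact Or.inl (h1.symm.trans h2)
          · exact Or.inl h2
        · rcases ih with h1 | ⟨h1, h2⟩ | ⟨h1, h2⟩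
          · exact Or.inr (Or.inr ⟨Reachable.refl _, h1⟩)
          · exact Or.inl h2
          · exact Or.inl (h1.symm.trans h2)

/-- adding (at most) one extra adjacency pair decreases the component count by at most 1 -/
lemma ncomp_le_succ (A A' : SimpleGraph V) (hle : A ≤ A') (x y : V)
    (hstep : ∀ u v, A'.Adj u v → A.Adj u v ∨ s(u, v) = s(x, y)) :
    ncomp A ≤ ncomp A' + 1 := by
  set mA := A.connectedComponentMk
  set mA' := A'.connectedComponentMk
  have key : ∀ u v : V, mA' u = mA' v → mA u = mA v ∨
      (mA u = mA x ∧ mA v = mA y) ∨ (mA u = mA y ∧ mA v = mA x) := by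
    intro u v huv
    rcases (ConnectedComponent.eq.1 huv) with ⟨w⟩
    rcases reach_insert_aux A A' x y hstep w with h1 | ⟨h1, h2⟩ | ⟨h1, h2⟩
    · exact Or.inl (ConnectedComponent.sound h1)
    · exact Or.inr (Or.inl ⟨ConnectedComponent.sound h1,
        ConnectedComponent.sound h2.symm⟩)
    · exact Or.inr (Or.inr ⟨ConnectedComponent.sound h1,
        ConnectedComponent.sound h2.symm⟩)
  have hmap : ∀ v : V, (ConnectedComponent.map (Hom.ofLE hle)) (mA v) = mA' v :=
    fun v => rfl
  have hx : mA x ∈ Finset.univ.image mA := Finset.mem_image_of_mem _ (Finset.mem_univ _)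
  have hcard : ((Finset.univ.image mA).erase (mA x)).card ≤ ncomp A' := by
    apply Finset.card_le_card_of_injOn (ConnectedComponent.map (Hom.ofLE hle))
    · intro c hc
      rcases Finset.mem_image.1 (Finset.mem_of_mem_erase hc) with ⟨v, -, rfl⟩
      rw [hmap]
      exact Finset.mem_image_of_mem _ (Finset.mem_univ _)
    · intro c1 hc1 c2 hc2 heq
      rcases Finset.mem_image.1 (Finset.mem_of_mem_erase hc1) with ⟨u, -, rfl⟩
      rcases Finset.mem_image.1 (Finset.mem_of_mem_erase hc2) with ⟨v, -, rfl⟩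
      have h1 : mA u ≠ mA x := Finset.ne_of_mem_erase hc1
      have h2 : mA v ≠ mA x := Finset.ne_of_mem_erase hc2
      rw [hmap, hmap] at heq
      rcases key u v heq with h | ⟨ha, hb⟩ | ⟨ha, hb⟩
      · exact h
      · exact absurd ha h1
      · exact absurd hb h2
  have h2 := Finset.card_erase_of_mem hx
  have h3 : ncomp A = (Finset.univ.image mA).card := rfl
  omega

end SRelProof

namespace SRelProof

open Finset SimpleGraph Multigraph
open scoped Classical

lemma sym2_rep {α : Type} (z : Sym2 α) : ∃ x y, z = s(x, y) :=
  z.ind (fun x y => ⟨x, y, rfl⟩)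

variable (G : Multigraph)

lemma subgraph_mono {E1 E2 : Finset G.E} (h : E1 ⊆ E2) :
    G.subgraph E1 ≤ G.subgraph E2 := by
  rintro u v ⟨hne, e, he, hend⟩
  exact ⟨hne, e, h he, hend⟩

lemma card_le_ncomp_subgraph (E' : Finset G.E) :
    Fintype.card G.V ≤ E'.card + ncomp (G.subgraph E') := by
  induction E' using Finset.induction_on with
  | empty =>
      rw [ncomp_eq_card]
      · simp
      · rintro u v ⟨-, e, he, -⟩
        exact absurd he (Finset.notMem_empty e)
  | @insert a s ha ih =>
      obtain ⟨x, y, hxy⟩ := sym2_rep (G.ends a)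
      have hstep : ∀ u v, (G.subgraph (insert a s)).Adj u v →
          (G.subgraph s).Adj u v ∨ s(u, v) = s(x, y) := by
        rintro u v ⟨hne, e, he, hend⟩
        rcases Finset.mem_insert.1 he with rfl | hes
        · exact Or.inr (hend.symm.trans hxy)
        · exact Or.inl ⟨hne, e, hes, hend⟩
      have := ncomp_le_succ (G.subgraph s) (G.subgraph (insert a s))
        (subgraph_mono G (Finset.subset_insert a s)) x y hstep
      have hc := Finset.card_insert_of_notMem ha
      omega

lemma splitstate_ncomp_le {s t : G.V} {E' : Finset G.E} (h : G.SplitState s t E') :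
    ncomp (G.subgraph E') ≤ 2 := by
  have : Finset.univ.image (G.subgraph E').connectedComponentMk ⊆
      {(G.subgraph E').connectedComponentMk s, (G.subgraph E').connectedComponentMk t} := by
    intro c hc
    rcases Finset.mem_image.1 hc with ⟨v, -, rfl⟩
    rcases h.2 v with hv | hv
    · exact Finset.mem_insert.2 (Or.inl (ConnectedComponent.sound hv))
    · exact Finset.mem_insert.2 (Or.inr (by
        simp only [Finset.mem_singleton]
        exact ConnectedComponent.sound hv))
  calc ncomp (G.subgraph E') ≤ _ := Finset.card_le_card this
    _ ≤ 2 := Finset.card_insert_le _ _ |>.trans (by simp)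

lemma splitstate_card_ge {s t : G.V} {E' : Finset G.E} (h : G.SplitState s t E') :
    Fintype.card G.V ≤ E'.card + 2 := by
  have h1 := card_le_ncomp_subgraph G E'
  have h2 := splitstate_ncomp_le G h
  omega

lemma Nst_eq_zero_of_small {s t : G.V} {i : ℕ} (h : i + 2 < Fintype.card G.V) :
    G.Nst s t i = 0 := by
  rw [Multigraph.Nst, Finset.card_eq_zero, Finset.filter_eq_empty_iff]
  rintro E' - ⟨hcard, hsplit⟩
  have := splitstate_card_ge G hsplit
  omega

lemma Nst_le_pow (s t : G.V) (i : ℕ) :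
    G.Nst s t i ≤ 2 ^ (Fintype.card G.E) := by
  rw [Multigraph.Nst]
  calc _ ≤ (Finset.univ : Finset (Finset G.E)).card := Finset.card_filter_le _ _
    _ = 2 ^ (Fintype.card G.E) := by rw [Finset.card_univ, Fintype.card_finset]

lemma Nst_top_eq_zero {s t : G.V} (hG : G.Connected) :
    G.Nst s t (Fintype.card G.E) = 0 := by
  rw [Multigraph.Nst, Finset.card_eq_zero, Finset.filter_eq_empty_iff]
  rintro E' - ⟨hcard, hsplit⟩
  have hE : E' = Finset.univ := Finset.eq_univ_of_card _ (by simpa using hcard)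
  subst hE
  exact hsplit.1 (hG.preconnected s t)

lemma sRel_eq_sum (s t : G.V) (p : ℝ) :
    G.sRel s t p = ∑ i ∈ Finset.range (Fintype.card G.E + 1),
      (G.Nst s t i : ℝ) * (p ^ i * (1 - p) ^ (Fintype.card G.E - i)) := by
  rw [Multigraph.sRel]
  rw [← Finset.sum_fiberwise_of_maps_to (g := fun E' : Finset G.E => E'.card)
      (t := Finset.range (Fintype.card G.E + 1))
      (fun E' _ => Finset.mem_range.2 (Nat.lt_succ_of_le (by
        simpa using Finset.card_le_univ E')))]
  apply Finset.sum_congr rfl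
  intro i hi
  have hcongr : ∀ E' ∈ Finset.univ.filter (fun E' : Finset G.E => E'.card = i),
      (if G.SplitState s t E' then p ^ E'.card * (1-p) ^ (Fintype.card G.E - E'.card) else 0)
      = (if G.SplitState s t E' then p ^ i * (1-p) ^ (Fintype.card G.E - i) else 0) := by
    intro E' hE'
    rcases Finset.mem_filter.1 hE' with ⟨-, hc⟩
    rw [hc]
  rw [Finset.sum_congr rfl hcongr, ← Finset.sum_filter, Finset.filter_filter]
  rw [Finset.sum_const, nsmul_eq_mul]
  have : G.Nst s t i = (Finset.univ.filter
      (fun E' : Finset G.E => E'.card = i ∧ G.SplitState s t E')).card := by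
    simp [Multigraph.Nst]
  rw [this]

end SRelProof

namespace SRelProof

open Finset

lemma poly_pos (M K : ℕ) (hK : K ≤ M) (c : ℕ → ℝ) (A : ℝ) (hA : 1 ≤ A)
    (hlow : ∀ i, i < K → c i = 0) (hcK : 1 ≤ c K) (hbd : ∀ i, |c i| ≤ A) :
    ∃ p : ℝ, 0 < p ∧ p < 1 ∧
      0 < ∑ i ∈ Finset.range (M + 1), c i * (p ^ i * (1 - p) ^ (M - i)) := by
  have h2M : (0:ℝ) < 2 ^ M := by positivity
  have h2M1 : (1:ℝ) ≤ 2 ^ M := one_le_pow₀ one_le_two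
  have hM1 : (1:ℝ) ≤ (M:ℝ) + 1 := by
    have := Nat.cast_nonneg (α := ℝ) M
    linarith
  set D : ℝ := 2 ^ M * A * ((M:ℝ) + 1) with hDdef
  have hD1 : (1:ℝ) ≤ D := by
    calc (1:ℝ) = 1 * 1 * 1 := by ring
    _ ≤ D := by apply mul_le_mul (mul_le_mul h2M1 hA zero_le_one (by linarith)) hM1 <;> nlinarith
  set p : ℝ := 1 / (2 * D + 2) with hpdef
  have hp0 : 0 < p := by rw [hpdef]; positivity
  have hp2 : p ≤ 1 / 2 := by
    rw [hpdef, div_le_div_iff₀ (by linarith) (by norm_num)]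
    linarith
  have hp1 : p < 1 := by linarith
  have hq0 : (0:ℝ) ≤ 1 - p := by linarith
  have hq2 : (1:ℝ)/2 ≤ 1 - p := by linarith
  have hq1 : 1 - p ≤ 1 := by linarith
  refine ⟨p, hp0, hp1, ?_⟩
  -- restrict the sum to Ico K (M+1)
  have hsub : ∑ i ∈ Finset.range (M + 1), c i * (p ^ i * (1 - p) ^ (M - i))
      = ∑ i ∈ Finset.Ico K (M + 1), c i * (p ^ i * (1 - p) ^ (M - i)) := by
    refine (Finset.sum_subset ?_ ?_).symm
    · intro x hx
      exact Finset.mem_range.2 (Finset.mem_Ico.1 hx).2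
    · intro x hx hnx
      have : x < K := by
        rcases Finset.mem_range.1 hx with h
        by_contra hc
        exact hnx (Finset.mem_Ico.2 ⟨le_of_not_gt hc, h⟩)
      rw [hlow x this, zero_mul]
  rw [hsub, Finset.sum_eq_sum_Ico_succ_bot (Nat.lt_succ_of_le hK)]
  -- head term bound
  have hhead : p ^ K * (1/2) ^ M ≤ c K * (p ^ K * (1 - p) ^ (M - K)) := by
    have h1 : ((1:ℝ)/2) ^ M ≤ (1/2 : ℝ) ^ (M - K) :=
      pow_le_pow_of_le_one (by norm_num) (by norm_num) (Nat.sub_le M K)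
    have h2 : ((1:ℝ)/2) ^ (M - K) ≤ (1 - p) ^ (M - K) :=
      pow_le_pow_left₀ (by norm_num) hq2 _
    have h3 : (0:ℝ) ≤ p ^ K := le_of_lt (pow_pos hp0 K)
    have hX : (0:ℝ) ≤ p ^ K * (1 - p) ^ (M - K) := by positivity
    calc p ^ K * (1/2) ^ M ≤ p ^ K * (1 - p) ^ (M - K) :=
          mul_le_mul_of_nonneg_left (h1.trans h2) h3
      _ = 1 * (p ^ K * (1 - p) ^ (M - K)) := (one_mul _).symm
      _ ≤ c K * (p ^ K * (1 - p) ^ (M - K)) := mul_le_mul_of_nonneg_right hcK hX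
  -- tail bound
  have htail : |∑ i ∈ Finset.Ico (K+1) (M+1), c i * (p ^ i * (1 - p) ^ (M - i))|
      ≤ ((M:ℝ) + 1) * A * p ^ (K + 1) := by
    calc |∑ i ∈ Finset.Ico (K+1) (M+1), c i * (p ^ i * (1 - p) ^ (M - i))|
        ≤ ∑ i ∈ Finset.Ico (K+1) (M+1), |c i * (p ^ i * (1 - p) ^ (M - i))| :=
          Finset.abs_sum_le_sum_abs _ _
      _ ≤ ∑ i ∈ Finset.Ico (K+1) (M+1), A * p ^ (K + 1) := by
          apply Finset.sum_le_sum
          intro i hi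
          rcases Finset.mem_Ico.1 hi with ⟨hi1, hi2⟩
          have hpi : (0:ℝ) ≤ p ^ i * (1 - p) ^ (M - i) := by positivity
          rw [abs_mul, abs_of_nonneg hpi]
          have b1 : p ^ i ≤ p ^ (K + 1) := pow_le_pow_of_le_one (le_of_lt hp0) (le_of_lt hp1) hi1
          have b2 : (1 - p) ^ (M - i) ≤ 1 := pow_le_one₀ hq0 hq1
          have b3 : |c i| ≤ A := hbd i
          have b4 : (0:ℝ) ≤ |c i| := abs_nonneg _
          have h5 : p ^ i * (1 - p) ^ (M - i) ≤ p ^ (K + 1) := by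
            calc p ^ i * (1 - p) ^ (M - i) ≤ p ^ (K+1) * 1 :=
                  mul_le_mul b1 b2 (by positivity) (by positivity)
              _ = p ^ (K+1) := mul_one _
          calc |c i| * (p ^ i * (1 - p) ^ (M - i))
              ≤ A * (p ^ i * (1 - p) ^ (M - i)) := mul_le_mul_of_nonneg_right b3 hpi
            _ ≤ A * p ^ (K + 1) := mul_le_mul_of_nonneg_left h5 (by linarith)
      _ = ((M:ℝ) - K) * (A * p ^ (K + 1)) := by
          rw [Finset.sum_const, Nat.card_Ico, nsmul_eq_mul]
          have e : M + 1 - (K + 1) = M - K := by omega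
          rw [e, Nat.cast_sub hK]
      _ ≤ ((M:ℝ) + 1) * A * p ^ (K + 1) := by
          have : (0:ℝ) ≤ A * p ^ (K + 1) := by positivity
          have hMK : ((M:ℝ) - K) ≤ (M:ℝ) + 1 := by
            have : (0:ℝ) ≤ (K:ℝ) := Nat.cast_nonneg K
            linarith
          calc ((M:ℝ) - K) * (A * p ^ (K + 1)) ≤ ((M:ℝ) + 1) * (A * p ^ (K + 1)) :=
                mul_le_mul_of_nonneg_right hMK this
            _ = ((M:ℝ) + 1) * A * p ^ (K + 1) := by ring
  -- the key numeric inequality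
  have main : ((M:ℝ) + 1) * A * p < (1/2) ^ M := by
    have e1 : ((1:ℝ)/2) ^ M = 1 / 2 ^ M := by rw [div_pow, one_pow]
    have e2 : ((M:ℝ) + 1) * A * 2 ^ M = D := by rw [hDdef]; ring
    rw [hpdef, mul_one_div, e1, div_lt_div_iff₀ (by linarith) h2M]
    nlinarith
  have hpK : (0:ℝ) < p ^ K := pow_pos hp0 K
  have hppow : p ^ (K + 1) = p ^ K * p := by ring
  have habs := abs_le.1 htail
  have key : ((M:ℝ) + 1) * A * p ^ (K + 1) < p ^ K * (1/2) ^ M := by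
    have h6 := mul_lt_mul_of_pos_left main hpK
    calc ((M:ℝ) + 1) * A * p ^ (K + 1) = p ^ K * (((M:ℝ) + 1) * A * p) := by ring
      _ < p ^ K * (1/2) ^ M := h6
  simp only [Nat.succ_eq_add_one]
  linarith [habs.1, hhead, key]

end SRelProof

namespace SRelProof

open Finset Multigraph

lemma sRel_lt_of_coeff_low (G H : Multigraph) (s t : G.V) (s' t' : H.V)
    (hE : Fintype.card H.E = Fintype.card G.E) (K : ℕ) (hK : K ≤ Fintype.card G.E)
    (hlowG : ∀ i, i < K → G.Nst s t i = 0) (hlowH : ∀ i, i < K → H.Nst s' t' i = 0)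
    (hKlt : G.Nst s t K < H.Nst s' t' K) :
    ∃ p : ℝ, 0 < p ∧ p < 1 ∧ G.sRel s t p < H.sRel s' t' p := by
  set M := Fintype.card G.E with hM
  set c : ℕ → ℝ := fun i => (H.Nst s' t' i : ℝ) - (G.Nst s t i : ℝ) with hc
  have hbd : ∀ i, |c i| ≤ (2:ℝ) ^ M := by
    intro i
    have h1 : (H.Nst s' t' i : ℝ) ≤ (2:ℝ) ^ M := by
      rw [show ((2:ℝ) ^ M) = ((2 ^ M : ℕ) : ℝ) by push_cast; ring]
      exact_mod_cast (hE ▸ Nst_le_pow H s' t' i)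
    have h2 : (G.Nst s t i : ℝ) ≤ (2:ℝ) ^ M := by
      rw [show ((2:ℝ) ^ M) = ((2 ^ M : ℕ) : ℝ) by push_cast; ring]
      exact_mod_cast Nst_le_pow G s t i
    have h3 : (0:ℝ) ≤ (H.Nst s' t' i : ℝ) := Nat.cast_nonneg _
    have h4 : (0:ℝ) ≤ (G.Nst s t i : ℝ) := Nat.cast_nonneg _
    rw [hc, abs_le]
    constructor <;> simp only <;> linarith
  obtain ⟨p, hp0, hp1, hpos⟩ := poly_pos M K hK c ((2:ℝ) ^ M)
    (one_le_pow₀ one_le_two)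
    (fun i hi => by simp only [hc, hlowG i hi, hlowH i hi]; norm_num)
    (by
      simp only [hc]
      have : (G.Nst s t K : ℝ) + 1 ≤ (H.Nst s' t' K : ℝ) := by exact_mod_cast hKlt
      linarith)
    hbd
  refine ⟨p, hp0, hp1, ?_⟩
  have hrw : H.sRel s' t' p - G.sRel s t p
      = ∑ i ∈ Finset.range (M + 1), c i * (p ^ i * (1 - p) ^ (M - i)) := by
    rw [sRel_eq_sum, sRel_eq_sum, hE, ← Finset.sum_sub_distrib]
    apply Finset.sum_congr rfl
    intro i hi
    simp only [hc]
    ring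
  linarith [hrw ▸ hpos]

lemma sRel_lt_of_coeff_high (G H : Multigraph) (s t : G.V) (s' t' : H.V)
    (hE : Fintype.card H.E = Fintype.card G.E) (K : ℕ) (hK : K ≤ Fintype.card G.E)
    (hhighG : ∀ i, K < i → i ≤ Fintype.card G.E → G.Nst s t i = 0)
    (hhighH : ∀ i, K < i → i ≤ Fintype.card G.E → H.Nst s' t' i = 0)
    (hKlt : G.Nst s t K < H.Nst s' t' K) :
    ∃ p : ℝ, 0 < p ∧ p < 1 ∧ G.sRel s t p < H.sRel s' t' p := by
  set M := Fintype.card G.E with hM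
  set c : ℕ → ℝ := fun i => (H.Nst s' t' i : ℝ) - (G.Nst s t i : ℝ) with hc
  have hbd : ∀ i, |c i| ≤ (2:ℝ) ^ M := by
    intro i
    have h1 : (H.Nst s' t' i : ℝ) ≤ (2:ℝ) ^ M := by
      rw [show ((2:ℝ) ^ M) = ((2 ^ M : ℕ) : ℝ) by push_cast; ring]
      exact_mod_cast (hE ▸ Nst_le_pow H s' t' i)
    have h2 : (G.Nst s t i : ℝ) ≤ (2:ℝ) ^ M := by
      rw [show ((2:ℝ) ^ M) = ((2 ^ M : ℕ) : ℝ) by push_cast; ring]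
      exact_mod_cast Nst_le_pow G s t i
    have h3 : (0:ℝ) ≤ (H.Nst s' t' i : ℝ) := Nat.cast_nonneg _
    have h4 : (0:ℝ) ≤ (G.Nst s t i : ℝ) := Nat.cast_nonneg _
    rw [hc, abs_le]
    constructor <;> simp only <;> linarith
  -- reflected coefficients
  set c' : ℕ → ℝ := fun j => c (M - j) with hc'
  obtain ⟨p', hp0, hp1, hpos⟩ := poly_pos M (M - K) (Nat.sub_le M K) c' ((2:ℝ) ^ M)
    (one_le_pow₀ one_le_two)
    (fun j hj => by
      simp only [hc', hc]
      have h1 : K < M - j := by omega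
      rw [hhighG _ h1 (Nat.sub_le M j), hhighH _ h1 (Nat.sub_le M j)]
      norm_num)
    (by
      simp only [hc', hc, Nat.sub_sub_self hK]
      have : (G.Nst s t K : ℝ) + 1 ≤ (H.Nst s' t' K : ℝ) := by exact_mod_cast hKlt
      linarith)
    (fun j => hbd _)
  refine ⟨1 - p', by linarith, by linarith, ?_⟩
  have hrefl : ∑ j ∈ Finset.range (M + 1), c' j * (p' ^ j * (1 - p') ^ (M - j))
      = ∑ i ∈ Finset.range (M + 1), c i * ((1 - p') ^ i * (1 - (1 - p')) ^ (M - i)) := by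
    rw [← Finset.sum_range_reflect]
    apply Finset.sum_congr rfl
    intro j hj
    have hjM : j ≤ M := Nat.lt_succ_iff.1 (Finset.mem_range.1 hj)
    have e1 : M + 1 - 1 - j = M - j := by omega
    have e2 : M - (M - j) = j := Nat.sub_sub_self hjM
    rw [e1]
    simp only [hc']
    rw [e2]
    have e3 : (1 : ℝ) - (1 - p') = p' := by ring
    rw [e3]
    ring
  have hrw : H.sRel s' t' (1 - p') - G.sRel s t (1 - p')
      = ∑ i ∈ Finset.range (M + 1), c i * ((1-p') ^ i * (1 - (1-p')) ^ (M - i)) := by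
    rw [sRel_eq_sum, sRel_eq_sum, hE, ← Finset.sum_sub_distrib]
    apply Finset.sum_congr rfl
    intro i hi
    simp only [hc]
    ring
  rw [hrefl] at hpos
  linarith [hrw ▸ hpos]

end SRelProof

namespace SRelProof

open Finset SimpleGraph Multigraph

section PathLike

variable (G : Multigraph) (v : ℕ → G.V) (π : G.E → ℕ) (n : ℕ)
variable (hn : 2 ≤ n) (hπ : ∀ e, π e < n - 1)
variable (hends : ∀ e, G.ends e = s(v (π e), v (π e + 1)))
variable (hinj : ∀ i j, i < n → j < n → v i = v j → i = j)

include hn hπ hends hinj in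
lemma path_reach : ∀ (c : ℕ) (E' : Finset G.E) (a : ℕ), a ≤ c → c ≤ n - 1 →
    (∀ i, a ≤ i → i < c → ∃ e ∈ E', π e = i) →
    (G.subgraph E').Reachable (v a) (v c) := by
  intro c
  induction c with
  | zero =>
      intro E' a ha _ _
      have : a = 0 := Nat.le_zero.1 ha
      subst this; exact Reachable.refl _
  | succ c ih =>
      intro E' a ha hc hcov
      rcases Nat.eq_or_lt_of_le ha with rfl | hlt
      · exact Reachable.refl _
      · have hac : a ≤ c := by omega
        have h1 : (G.subgraph E').Reachable (v a) (v c) :=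
          ih E' a hac (by omega) (fun i h1 h2 => hcov i h1 (by omega))
        obtain ⟨e, he, hpe⟩ := hcov c hac (Nat.lt_succ_self c)
        have hadj : (G.subgraph E').Adj (v c) (v (c + 1)) := by
          refine ⟨?_, e, he, ?_⟩
          · intro hvv
            have := hinj c (c+1) (by omega) (by omega) hvv
            omega
          · rw [hends e, hpe]
        exact h1.trans hadj.reachable

variable (hsurj : ∀ u : G.V, ∃ i, i < n ∧ u = v i)

include hn hπ hends hinj hsurj in
lemma path_connected (hcov : ∀ i, i < n - 1 → ∃ e : G.E, π e = i) : G.Connected := by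
  rw [Multigraph.Connected]
  have hne : Nonempty G.V := ⟨v 0⟩
  rw [SimpleGraph.connected_iff]
  refine ⟨?_, hne⟩
  have key : ∀ i, i ≤ n - 1 → (G.subgraph Finset.univ).Reachable (v i) (v (n-1)) := by
    intro i hi
    exact path_reach G v π n hn hπ hends hinj (n-1) Finset.univ i hi le_rfl
      (fun k _ hk => by obtain ⟨e, he⟩ := hcov k (by omega); exact ⟨e, Finset.mem_univ e, he⟩)
  intro u w
  obtain ⟨i, hi, rfl⟩ := hsurj u
  obtain ⟨j, hj, rfl⟩ := hsurj w
  exact (key i (by omega)).trans (key j (by omega)).symm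

include hn hπ hends hinj hsurj in
lemma path_split (E' : Finset G.E) (j : ℕ) (hj : j < n - 1)
    (hnot : ∀ e ∈ E', π e ≠ j)
    (hcov : ∀ i, i < n - 1 → i ≠ j → ∃ e ∈ E', π e = i) :
    G.SplitState (v 0) (v (n - 1)) E' := by
  have hclosed : ∀ u w : G.V, u ∈ {u : G.V | ∃ i, i ≤ j ∧ u = v i} →
      (G.subgraph E').Adj u w → w ∈ {u : G.V | ∃ i, i ≤ j ∧ u = v i} := by
    rintro u w ⟨i, hij, rfl⟩ ⟨hne, e, he, hend⟩
    have hpe := hπ e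
    rw [hends e, Sym2.eq_iff] at hend
    have hπj := hnot e he
    rcases hend with ⟨h1, h2⟩ | ⟨h1, h2⟩
    · have : π e = i := hinj _ _ (by omega) (by omega) h1
      exact ⟨π e + 1, by omega, h2.symm⟩
    · have : π e + 1 = i := hinj _ _ (by omega) (by omega) h2
      exact ⟨π e, by omega, h1.symm⟩
  constructor
  · intro hreach
    have h0 : v 0 ∈ {u : G.V | ∃ i, i ≤ j ∧ u = v i} := ⟨0, Nat.zero_le _, rfl⟩
    have := reach_closed _ _ hclosed _ _ hreach h0
    obtain ⟨i, hij, hvi⟩ := this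
    have := hinj (n-1) i (by omega) (by omega) hvi
    omega
  · intro u
    obtain ⟨i, hi, rfl⟩ := hsurj u
    rcases le_or_gt i j with hij | hij
    · left
      exact (path_reach G v π n hn hπ hends hinj i E' 0 (Nat.zero_le _) (by omega)
        (fun k hk1 hk2 => hcov k (by omega) (by omega))).symm
    · right
      exact path_reach G v π n hn hπ hends hinj (n-1) E' i (by omega) le_rfl
        (fun k hk1 hk2 => hcov k (by omega) (by omega))

end PathLike

end SRelProof

namespace SRelProof

open Finset SimpleGraph Multigraph
open scoped Classical

section Case1

variable (n m : ℕ) (hn : 4 ≤ n) (hm : n < m)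

/-- vertex enumeration of `Fin n` -/
def vtx (hn0 : 0 < n) : ℕ → Fin n := fun i => ⟨i % n, Nat.mod_lt _ hn0⟩

lemma vtx_eq (hn0 : 0 < n) (i : ℕ) (h : i < n) : vtx n hn0 i = ⟨i, h⟩ :=
  Fin.ext (Nat.mod_eq_of_lt h)

lemma vtx_inj (hn0 : 0 < n) : ∀ i j, i < n → j < n → vtx n hn0 i = vtx n hn0 j → i = j := by
  intro i j hi hj hij
  rw [vtx_eq n hn0 i hi, vtx_eq n hn0 j hj] at hij
  exact Fin.mk.inj_iff.1 hij

lemma vtx_surj (hn0 : 0 < n) : ∀ u : Fin n, ∃ i, i < n ∧ u = vtx n hn0 i := by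
  intro u
  exact ⟨u.val, u.isLt, (vtx_eq n hn0 u.val u.isLt).symm ▸ (Fin.ext rfl)⟩

include hn hm in
lemma case1_main (G : Multigraph) (s t : G.V) (hG : G.Connected)
    (hV : Fintype.card G.V = n) (hE : Fintype.card G.E = m) (hst : s ≠ t)
    (hcase : G.Nst s t (m - 1) < n - 2) :
    ∃ (H : Multigraph) (s' t' : H.V), H.Connected ∧ Fintype.card H.V = n ∧
      Fintype.card H.E = m ∧ s' ≠ t' ∧
      ∃ p : ℝ, 0 < p ∧ p < 1 ∧ G.sRel s t p < H.sRel s' t' p := by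
  have hk0 : 0 < n - 1 := by omega
  have hn0 : 0 < n := by omega
  set H := Gnm n m 0 hk0 with hH
  set v : ℕ → H.V := vtx n hn0 with hv
  set π : H.E → ℕ := fun e => if (e : Fin m).val < n - 1 then (e : Fin m).val else 0 with hπdef
  have hπ : ∀ e, π e < n - 1 := by
    intro e
    simp only [hπdef]
    split <;> omega
  have hends : ∀ e, H.ends e = s(v (π e), v (π e + 1)) := by
    intro e
    show (Gnm n m 0 hk0).ends e = _
    simp only [Gnm, hπdef]
    by_cases h : (e : Fin m).val < n - 1
    · rw [dif_pos h, if_pos h, hv, vtx_eq n hn0 _ (by omega), vtx_eq n hn0 _ (by omega)]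
      rfl
    · rw [dif_neg h, if_neg h, hv, vtx_eq n hn0 _ (by omega), vtx_eq n hn0 _ (by omega)]
      rfl
  have hinj := vtx_inj n hn0
  have hsurj := vtx_surj n hn0
  have hHconn : H.Connected := by
    apply path_connected H v π n (by omega) hπ hends hinj hsurj
    intro i hi
    refine ⟨(⟨i, by omega⟩ : Fin m), ?_⟩
    simp only [hπdef]
    rw [if_pos]
    exact hi
  set s' : H.V := v 0 with hs'
  set t' : H.V := v (n - 1) with ht'
  have hst' : s' ≠ t' := by
    intro h
    have := hinj 0 (n-1) (by omega) (by omega) h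
    omega
  -- split states of H of size m-1
  have hsplitH : ∀ j, 1 ≤ j → j < n - 1 →
      H.SplitState s' t' (Finset.univ.erase (⟨j % m, Nat.mod_lt _ (by omega)⟩ : Fin m)) := by
    intro j hj1 hj2
    have hjm : j % m = j := Nat.mod_eq_of_lt (by omega)
    apply path_split H v π n (by omega) hπ hends hinj hsurj _ j hj2
    · intro e he
      simp only [hπdef]
      by_cases h : (e : Fin m).val < n - 1
      · rw [if_pos h]
        intro hej
        apply Finset.ne_of_mem_erase he
        apply Fin.ext
        show (e : Fin m).val = j % m
        rw [hjm]
        exact hej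
      · rw [if_neg h]
        omega
    · intro i hi hij
      refine ⟨(⟨i, by omega⟩ : Fin m), ?_, ?_⟩
      · apply Finset.mem_erase.2
        refine ⟨?_, Finset.mem_univ _⟩
        intro hcon
        replace hcon := Fin.mk.inj_iff.mp hcon
        omega
      · simp only [hπdef]
        exact if_pos hi
  have hcardV : Fintype.card H.V = n := Fintype.card_fin n
  have hcardE : Fintype.card H.E = m := Fintype.card_fin m
  -- lower bound on Nst H s' t' (m-1)
  have hNstH : n - 2 ≤ H.Nst s' t' (m - 1) := by
    rw [Multigraph.Nst]
    have : n - 2 = (Finset.Ico 1 (n-1)).card := by rw [Nat.card_Ico]; omega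
    rw [this]
    apply Finset.card_le_card_of_injOn
      (fun j => Finset.univ.erase (⟨j % m, Nat.mod_lt _ (by omega)⟩ : Fin m))
    · intro j hj
      rcases Finset.mem_Ico.1 hj with ⟨hj1, hj2⟩
      exact Finset.mem_coe.2 ((@Finset.mem_filter _
        (fun E' : Finset H.E => E'.card = m - 1 ∧ H.SplitState s' t' E') (fun _ => instDecidableAnd) _ _).2 ⟨Finset.mem_univ _,
        (Finset.card_erase_of_mem (Finset.mem_univ _)).trans (by exact congrArg (· - 1) (Finset.card_fin m)),
        hsplitH j hj1 hj2⟩)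
    · intro j1 hj1 j2 hj2 heq
      dsimp only at heq
      rcases Finset.mem_Ico.1 hj1 with ⟨h11, h12⟩
      rcases Finset.mem_Ico.1 hj2 with ⟨h21, h22⟩
      have : (⟨j1 % m, Nat.mod_lt _ (by omega)⟩ : Fin m) =
          ⟨j2 % m, Nat.mod_lt _ (by omega)⟩ := by
        by_contra hne
        have h1 : (⟨j1 % m, Nat.mod_lt _ (by omega)⟩ : Fin m) ∈
            Finset.univ.erase (⟨j2 % m, Nat.mod_lt _ (by omega)⟩ : Fin m) :=
          Finset.mem_erase.2 ⟨hne, Finset.mem_univ _⟩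
        rw [← heq] at h1
        exact (Finset.notMem_erase _ _) h1
      rw [Fin.mk.inj_iff, Nat.mod_eq_of_lt (by omega), Nat.mod_eq_of_lt (by omega)] at this
      exact this
  refine ⟨H, s', t', hHconn, hcardV, hcardE, hst', ?_⟩
  apply sRel_lt_of_coeff_high G H s t s' t' (by rw [hcardE, hE]) (m - 1) (by rw [hE]; omega)
  · intro i hi1 hi2
    rw [hE] at hi2
    have : i = m := by omega
    rw [this, ← hE]
    exact Nst_top_eq_zero G hG
  · intro i hi1 hi2
    rw [hE] at hi2
    have : i = m := by omega
    rw [this, ← hcardE]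
    exact Nst_top_eq_zero H hHconn
  · omega

end Case1

end SRelProof

namespace SRelProof

open Finset SimpleGraph Multigraph
open scoped Classical

section Case2G

variable (G : Multigraph) (s t : G.V)

/-- the side of `s` after removing edge `b` -/
def Sb (b : G.E) : Set G.V := {v | (G.subgraph (Finset.univ.erase b)).Reachable v s}

lemma Sb_mem_s (b : G.E) : s ∈ Sb G s b := Reachable.refl _

lemma Sb_not_mem_t {b : G.E} (hb : G.SplitState s t (Finset.univ.erase b)) :
    t ∉ Sb G s b := fun h => hb.1 h.symm

lemma Sb_adj_iff {b : G.E} {u w : G.V}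
    (h : (G.subgraph (Finset.univ.erase b)).Adj u w) :
    u ∈ Sb G s b ↔ w ∈ Sb G s b :=
  ⟨fun hu => (h.symm.reachable).trans hu, fun hw => (h.reachable).trans hw⟩

lemma Sb_noncross {b e : G.E} (he : e ≠ b) {u w : G.V} (hend : G.ends e = s(u, w)) :
    u ∈ Sb G s b ↔ w ∈ Sb G s b := by
  have hne : u ≠ w := by
    intro h
    subst h
    exact G.loopless e (hend ▸ Sym2.mk_isDiag_iff.2 rfl)
  exact Sb_adj_iff G s ⟨hne, e, Finset.mem_erase.2 ⟨he, Finset.mem_univ _⟩, hend⟩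

lemma Sb_cross (hG : G.Connected) {b : G.E} (hb : G.SplitState s t (Finset.univ.erase b))
    {x y : G.V} (hxy : G.ends b = s(x, y)) : ¬ (x ∈ Sb G s b ↔ y ∈ Sb G s b) := by
  intro hiff
  by_cases hx : x ∈ Sb G s b
  · -- both endpoints in Sb: Sb is closed under the full graph, so t ∈ Sb, contra
    have hy : y ∈ Sb G s b := hiff.1 hx
    have hclosed : ∀ u w : G.V, u ∈ Sb G s b → (G.subgraph Finset.univ).Adj u w →
        w ∈ Sb G s b := by
      rintro u w hu ⟨hne, e, -, hend⟩
      by_cases heb : e = b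
      · subst heb
        rw [hxy, Sym2.eq_iff] at hend
        rcases hend with ⟨rfl, rfl⟩ | ⟨rfl, rfl⟩
        · exact hy
        · exact hx
      · exact (Sb_noncross G s heb hend).1 ((Sb_noncross G s heb hend).2 ((Sb_noncross G s heb hend).1 hu))
    have hts : t ∈ Sb G s b :=
      reach_closed _ _ hclosed s t (hG.preconnected s t) (Sb_mem_s G s b)
    exact Sb_not_mem_t G s t hb hts
  · have hy : y ∉ Sb G s b := fun h => hx (hiff.2 h)
    have hclosed : ∀ u w : G.V, u ∉ Sb G s b → (G.subgraph Finset.univ).Adj u w →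
        w ∉ Sb G s b := by
      rintro u w hu ⟨hne, e, -, hend⟩ hw
      by_cases heb : e = b
      · subst heb
        rw [hxy, Sym2.eq_iff] at hend
        rcases hend with ⟨rfl, rfl⟩ | ⟨rfl, rfl⟩
        · exact hy hw
        · exact hx hw
      · exact hu ((Sb_noncross G s heb hend).2 hw)
    have hss : s ∉ Sb G s b :=
      reach_closed _ {v | v ∉ Sb G s b} hclosed t s (hG.preconnected t s)
        (Sb_not_mem_t G s t hb)
    exact hss (Sb_mem_s G s b)

lemma Sb_compare {b b' : G.E} (hbb' : b ≠ b')
    (hb : G.SplitState s t (Finset.univ.erase b))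
    (hb' : G.SplitState s t (Finset.univ.erase b')) :
    Sb G s b ⊆ Sb G s b' ∨ Sb G s b' ⊆ Sb G s b := by
  obtain ⟨x', y', hxy'⟩ := sym2_rep (G.ends b')
  have hnc := Sb_noncross G s (b := b) (e := b') (Ne.symm hbb') hxy'
  by_cases hx' : x' ∈ Sb G s b
  · -- both ends of b' inside Sb b : then Sb b' ⊆ Sb b
    right
    have hy' : y' ∈ Sb G s b := hnc.1 hx'
    intro v hv
    by_contra hvb
    -- v ∉ Sb b, so v reaches t in G - b; transfer to G - b'
    have hvt : (G.subgraph (Finset.univ.erase b)).Reachable v t := by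
      rcases hb.2 v with h | h
      · exact absurd h hvb
      · exact h
    have htrans := reach_transfer (G.subgraph (Finset.univ.erase b))
      (G.subgraph (Finset.univ.erase b')) t (Sb G s b)
      (fun w hw hwS => hb.1 (hwS.symm.trans hw))
      (by
        rintro u w hu hw ⟨hne, e, he, hend⟩
        have heb : e ≠ b := Finset.ne_of_mem_erase he
        have heb' : e ≠ b' := by
          rintro rfl
          rw [hxy', Sym2.eq_iff] at hend
          rcases hend with ⟨rfl, rfl⟩ | ⟨rfl, rfl⟩
          · exact hu hx'
          · exact hu hy'
        exact ⟨hne, e, Finset.mem_erase.2 ⟨heb', Finset.mem_univ _⟩, hend⟩)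
      v hvt
    exact hb'.1 (hv.symm.trans htrans)
  · -- both ends of b' outside Sb b : then Sb b ⊆ Sb b'
    left
    have hy' : y' ∉ Sb G s b := fun h => hx' (hnc.2 h)
    intro v hv
    have htrans := reach_transfer (G.subgraph (Finset.univ.erase b))
      (G.subgraph (Finset.univ.erase b')) s {w | w ∉ Sb G s b}
      (fun w hw hwS => hwS hw)
      (by
        rintro u w hu hw ⟨hne, e, he, hend⟩
        simp only [Set.mem_setOf_eq, not_not] at hu hw
        have heb : e ≠ b := Finset.ne_of_mem_erase he
        have heb' : e ≠ b' := by
          rintro rfl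
          rw [hxy', Sym2.eq_iff] at hend
          rcases hend with ⟨rfl, rfl⟩ | ⟨rfl, rfl⟩
          · exact hx' hu
          · exact hy' hu
        exact ⟨hne, e, Finset.mem_erase.2 ⟨heb', Finset.mem_univ _⟩, hend⟩)
      v hv
    exact htrans

lemma Sb_inj (hG : G.Connected) {b b' : G.E} (hbb' : b ≠ b')
    (hb : G.SplitState s t (Finset.univ.erase b)) :
    Sb G s b ≠ Sb G s b' := by
  intro heq
  obtain ⟨x, y, hxy⟩ := sym2_rep (G.ends b)
  exact Sb_cross G s t hG hb hxy (heq ▸ Sb_noncross G s (b := b') (e := b) hbb' hxy)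

end Case2G

end SRelProof

namespace SRelProof

open Finset SimpleGraph Multigraph
open scoped Classical

section Case2G2

variable (G : Multigraph) (s t : G.V)

/-- the set of edges whose removal leaves a split state -/
noncomputable def Bset : Finset G.E :=
  Finset.univ.filter (fun e => G.SplitState s t (Finset.univ.erase e))

lemma mem_Bset {e : G.E} : e ∈ Bset G s t ↔ G.SplitState s t (Finset.univ.erase e) := by
  simp [Bset]

/-- the level of a vertex with respect to the chain of cuts -/
noncomputable def fval (v : G.V) : ℕ :=
  ((Bset G s t).filter (fun b => v ∉ Sb G s b)).card

lemma fval_s : fval G s t s = 0 := by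
  rw [fval, Finset.card_eq_zero, Finset.filter_eq_empty_iff]
  intro b _
  exact fun h => h (Sb_mem_s G s b)

lemma fval_lt {u v : G.V} {b : G.E} (hb : b ∈ Bset G s t)
    (hu : u ∈ Sb G s b) (hv : v ∉ Sb G s b) : fval G s t u < fval G s t v := by
  apply Finset.card_lt_card
  constructor
  · intro b'' hb''
    rcases Finset.mem_filter.1 hb'' with ⟨hB'', hu''⟩
    have hbb'' : b'' ≠ b := fun h => hu'' (h ▸ hu)
    rcases Sb_compare G s t hbb''.symm ((mem_Bset G s t).1 hb) ((mem_Bset G s t).1 hB'') with hss | hss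
    · exact absurd (hss hu) hu''
    · exact Finset.mem_filter.2 ⟨hB'', fun h => hv (hss h)⟩
  · intro hsub
    have : b ∈ (Bset G s t).filter (fun b' => u ∉ Sb G s b') :=
      hsub (Finset.mem_filter.2 ⟨hb, hv⟩)
    exact (Finset.mem_filter.1 this).2 hu

lemma fval_eq_iff {u v : G.V} (h : fval G s t u = fval G s t v) :
    ∀ b ∈ Bset G s t, (u ∈ Sb G s b ↔ v ∈ Sb G s b) := by
  intro b hb
  by_cases hu : u ∈ Sb G s b <;> by_cases hv : v ∈ Sb G s b
  · exact iff_of_true hu hv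
  · exact absurd h (Nat.ne_of_lt (fval_lt G s t hb hu hv))
  · exact absurd h.symm (Nat.ne_of_lt (fval_lt G s t hb hv hu))
  · exact iff_of_false hu hv

lemma edge_fiber {e : G.E} (he : e ∉ Bset G s t) {u w : G.V}
    (hend : G.ends e = s(u, w)) : u ≠ w ∧ fval G s t u = fval G s t w := by
  constructor
  · intro h
    subst h
    exact G.loopless e (hend ▸ Sym2.mk_isDiag_iff.2 rfl)
  · unfold fval
    congr 1
    apply Finset.filter_congr
    intro b hb
    have heb : e ≠ b := fun h => he (h ▸ hb)
    exact not_congr (Sb_noncross G s heb hend)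

lemma exists_cross (hG : G.Connected) {b : G.E} (hb : b ∈ Bset G s t) :
    ∃ x y : G.V, x ∈ Sb G s b ∧ y ∉ Sb G s b ∧
      (G.ends b = s(x, y) ∨ G.ends b = s(y, x)) := by
  obtain ⟨x, y, hxy⟩ := sym2_rep (G.ends b)
  have hcross := Sb_cross G s t hG ((mem_Bset G s t).1 hb) hxy
  by_cases hx : x ∈ Sb G s b
  · have hy : y ∉ Sb G s b := fun h => hcross (iff_of_true hx h)
    exact ⟨x, y, hx, hy, Or.inl hxy⟩
  · have hy : y ∈ Sb G s b := by
      by_contra hy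
      exact hcross (iff_of_false hx hy)
    exact ⟨y, x, hy, hx, Or.inr hxy⟩

lemma Bset_structure (hG : G.Connected) (hn4 : 4 ≤ Fintype.card G.V)
    (hm : Fintype.card G.V < Fintype.card G.E)
    (hB : Fintype.card G.V - 2 ≤ (Bset G s t).card) :
    (Bset G s t).card = Fintype.card G.V - 2 ∧
      ∃ x y : G.V, x ≠ y ∧ ∀ e, e ∉ Bset G s t → G.ends e = s(x, y) := by
  set n := Fintype.card G.V with hn
  set B := Bset G s t with hBdef
  set f := fval G s t with hf
  have hcross : ∀ b : G.E, b ∈ B → ∃ x y : G.V, x ∈ Sb G s b ∧ y ∉ Sb G s b ∧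
      (G.ends b = s(x, y) ∨ G.ends b = s(y, x)) := fun b hb => exists_cross G s t hG hb
  choose xb yb hxb hyb hendb using hcross
  -- Step A : many distinct values of f
  have hposy : ∀ (b : G.E) (hb : b ∈ B), 1 ≤ f (yb b hb) := by
    intro b hb
    apply Finset.card_pos.2
    exact ⟨b, Finset.mem_filter.2 ⟨hb, hyb b hb⟩⟩
  have hyinj : ∀ (b : G.E) (hb : b ∈ B) (b' : G.E) (hb' : b' ∈ B),
      f (yb b hb) = f (yb b' hb') → b = b' := by
    intro b hb b' hb' heq
    by_contra hbb'
    have hiff := fval_eq_iff G s t heq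
    have h1 : yb b' hb' ∉ Sb G s b := fun h => (hyb b hb) ((hiff b hb).2 h)
    have h2 : yb b hb ∉ Sb G s b' := fun h => (hyb b' hb') ((hiff b' hb').1 h)
    have h3 : xb b' hb' ∉ Sb G s b := by
      rcases hendb b' hb' with hh | hh
      · exact fun h => h1 ((Sb_noncross G s (b := b) (Ne.symm hbb') hh).1 h)
      · exact fun h => h1 ((Sb_noncross G s (b := b) (Ne.symm hbb') hh).2 h)
    have h4 : xb b hb ∉ Sb G s b' := by
      rcases hendb b hb with hh | hh
      · exact fun h => h2 ((Sb_noncross G s (b := b') hbb' hh).1 h)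
      · exact fun h => h2 ((Sb_noncross G s (b := b') hbb' hh).2 h)
    rcases Sb_compare G s t hbb' ((mem_Bset G s t).1 hb) ((mem_Bset G s t).1 hb') with hss | hss
    · exact h4 (hss (hxb b hb))
    · exact h3 (hss (hxb b' hb'))
  set A := Finset.univ.image f with hA
  have hstepA : B.card + 1 ≤ A.card := by
    have himgcard : (B.attach.image (fun b => f (yb b.1 b.2))).card = B.card := by
      rw [Finset.card_image_of_injOn, Finset.card_attach]
      intro b1 _ b2 _ heq
      exact Subtype.ext (hyinj b1.1 b1.2 b2.1 b2.2 heq)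
    have hzero : (0 : ℕ) ∉ B.attach.image (fun b => f (yb b.1 b.2)) := by
      intro h
      rcases Finset.mem_image.1 h with ⟨b, -, hb0⟩
      have := hposy b.1 b.2
      omega
    have hsubA : insert 0 (B.attach.image (fun b => f (yb b.1 b.2))) ⊆ A := by
      intro c hc
      rcases Finset.mem_insert.1 hc with rfl | hc
      · exact Finset.mem_image.2 ⟨s, Finset.mem_univ _, (fval_s G s t)⟩
      · rcases Finset.mem_image.1 hc with ⟨b, -, rfl⟩
        exact Finset.mem_image.2 ⟨yb b.1 b.2, Finset.mem_univ _, rfl⟩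
    calc B.card + 1 = (insert 0 (B.attach.image (fun b => f (yb b.1 b.2)))).card := by
          rw [Finset.card_insert_of_notMem hzero, himgcard]
      _ ≤ A.card := Finset.card_le_card hsubA
  have hAn : A.card ≤ n := by
    calc A.card ≤ Finset.univ.card := Finset.card_image_le
      _ = n := Finset.card_univ
  -- Step C/D : fibers and an edge outside B
  set fib : ℕ → ℕ := fun c => (Finset.univ.filter (fun v => f v = c)).card with hfibdef
  have hfib : ∀ c ∈ A, 1 ≤ fib c := by
    intro c hc
    rcases Finset.mem_image.1 hc with ⟨v, -, rfl⟩
    exact Finset.card_pos.2 ⟨v, Finset.mem_filter.2 ⟨Finset.mem_univ _, rfl⟩⟩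
  have hsumfib : ∑ c ∈ A, fib c = n := by
    simp only [hfibdef]
    rw [← Finset.card_eq_sum_card_image f Finset.univ, Finset.card_univ]
  have hBne : B.card < Fintype.card G.E := by omega
  have hout : ∃ e : G.E, e ∉ B := by
    by_contra h
    push_neg at h
    have : Finset.univ ⊆ B := fun e _ => h e
    have := Finset.card_le_card this
    rw [Finset.card_univ] at this
    omega
  obtain ⟨e0, he0⟩ := hout
  have hbig : ∀ e : G.E, e ∉ B → ∃ c ∈ A, 2 ≤ fib c := by
    intro e he
    obtain ⟨u, w, hend⟩ := sym2_rep (G.ends e)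
    obtain ⟨hne, hfe⟩ := edge_fiber G s t he hend
    refine ⟨f u, Finset.mem_image.2 ⟨u, Finset.mem_univ _, rfl⟩, ?_⟩
    apply Finset.one_lt_card.2
    exact ⟨u, Finset.mem_filter.2 ⟨Finset.mem_univ _, rfl⟩,
      w, Finset.mem_filter.2 ⟨Finset.mem_univ _, hfe.symm⟩, hne⟩
  have hAne : A.card ≠ n := by
    intro hAcard
    have hall : ∀ c ∈ A, fib c = 1 := by
      have h1 : ∑ c ∈ A, (1:ℕ) = ∑ c ∈ A, fib c := by
        rw [hsumfib, Finset.sum_const, smul_eq_mul, mul_one, hAcard]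
      intro c hc
      exact ((Finset.sum_eq_sum_iff_of_le hfib).1 h1 c hc).symm
    obtain ⟨c, hc, hc2⟩ := hbig e0 he0
    have := hall c hc
    omega
  have hBcard : B.card = n - 2 := by omega
  have hAcard : A.card = n - 1 := by omega
  refine ⟨hBcard, ?_⟩
  -- Step F : exactly one fiber of size two
  have hsum1 : ∑ c ∈ A, (fib c - 1) = 1 := by
    have he : ∀ c ∈ A, fib c = (fib c - 1) + 1 := by
      intro c hc
      have := hfib c hc
      omega
    have : ∑ c ∈ A, fib c = (∑ c ∈ A, (fib c - 1)) + A.card := by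
      rw [Finset.sum_congr rfl he, Finset.sum_add_distrib, Finset.sum_const,
        smul_eq_mul, mul_one]
    rw [hsumfib] at this
    omega
  have hex : ∃ c0 ∈ A, 1 ≤ fib c0 - 1 := by
    by_contra h
    push_neg at h
    have : ∑ c ∈ A, (fib c - 1) = 0 := Finset.sum_eq_zero (fun c hc => by
      have := h c hc; omega)
    omega
  obtain ⟨c0, hc0, hc0ge⟩ := hex
  have hrest : ∀ c ∈ A, c ≠ c0 → fib c = 1 := by
    have hsplit : fib c0 - 1 + ∑ c ∈ A.erase c0, (fib c - 1) = ∑ c ∈ A, (fib c - 1) :=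
      Finset.add_sum_erase A (fun c => fib c - 1) hc0
    have hz : ∑ c ∈ A.erase c0, (fib c - 1) = 0 := by omega
    intro c hc hcne
    have := (Finset.sum_eq_zero_iff.1 hz) c (Finset.mem_erase.2 ⟨hcne, hc⟩)
    have := hfib c hc
    omega
  have hc0two : fib c0 = 2 := by
    have hsplit : fib c0 - 1 + ∑ c ∈ A.erase c0, (fib c - 1) = ∑ c ∈ A, (fib c - 1) :=
      Finset.add_sum_erase A (fun c => fib c - 1) hc0
    have hz : (0:ℕ) ≤ ∑ c ∈ A.erase c0, (fib c - 1) := Nat.zero_le _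
    have := hfib c0 hc0
    omega
  obtain ⟨x, y, hxyne, hfibxy⟩ := Finset.card_eq_two.1 hc0two
  refine ⟨x, y, hxyne, ?_⟩
  intro e he
  obtain ⟨u, w, hend⟩ := sym2_rep (G.ends e)
  obtain ⟨hne, hfe⟩ := edge_fiber G s t he hend
  have hfuA : f u ∈ A := Finset.mem_image.2 ⟨u, Finset.mem_univ _, rfl⟩
  have hfuc0 : f u = c0 := by
    by_contra hh
    have h1 := hrest (f u) hfuA hh
    have h2 : 2 ≤ fib (f u) := Finset.one_lt_card.2
      ⟨u, Finset.mem_filter.2 ⟨Finset.mem_univ _, rfl⟩,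
        w, Finset.mem_filter.2 ⟨Finset.mem_univ _, hfe.symm⟩, hne⟩
    omega
  have humem : u ∈ ({x, y} : Finset G.V) := by
    rw [← hfibxy]
    exact Finset.mem_filter.2 ⟨Finset.mem_univ _, hfuc0⟩
  have hwmem : w ∈ ({x, y} : Finset G.V) := by
    rw [← hfibxy]
    exact Finset.mem_filter.2 ⟨Finset.mem_univ _, hfe.symm.trans hfuc0⟩
  rw [hend]
  rcases Finset.mem_insert.1 humem with rfl | hu1
  · rcases Finset.mem_insert.1 hwmem with rfl | hw1
    · exact absurd rfl hne
    · rw [Finset.mem_singleton.1 hw1]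
  · have hu : u = y := Finset.mem_singleton.1 hu1
    subst hu
    rcases Finset.mem_insert.1 hwmem with rfl | hw1
    · exact Sym2.eq_swap
    · exact absurd (Finset.mem_singleton.1 hw1).symm hne

end Case2G2

end SRelProof

namespace SRelProof

open Finset SimpleGraph Multigraph
open scoped Classical

section Case2Bounds

variable (G : Multigraph) (s t : G.V)

lemma Nst_m1_eq_Bcard (hm1 : 1 ≤ Fintype.card G.E) :
    G.Nst s t (Fintype.card G.E - 1) = (Bset G s t).card := by
  have hNst : G.Nst s t (Fintype.card G.E - 1) = (Finset.univ.filter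
      (fun E' : Finset G.E => E'.card = Fintype.card G.E - 1 ∧ G.SplitState s t E')).card := by
    simp [Multigraph.Nst]
  rw [hNst]
  symm
  apply Finset.card_bij (fun (e : G.E) (_ : e ∈ Bset G s t) => Finset.univ.erase e)
  · intro e he
    apply Finset.mem_filter.2
    refine ⟨Finset.mem_univ _, ?_, (mem_Bset G s t).1 he⟩
    rw [Finset.card_erase_of_mem (Finset.mem_univ _), Finset.card_univ]
  · intro e1 he1 e2 he2 heq
    by_contra hne
    have h1 : e1 ∈ Finset.univ.erase e2 := Finset.mem_erase.2 ⟨hne, Finset.mem_univ _⟩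
    rw [← heq] at h1
    exact (Finset.notMem_erase e1 Finset.univ) h1
  · intro E' hE'
    rcases Finset.mem_filter.1 hE' with ⟨-, hcard, hsplit⟩
    have hcs : (Finset.univ \ E').card = 1 := by
      rw [Finset.card_sdiff_of_subset (Finset.subset_univ _), Finset.card_univ, hcard]
      omega
    obtain ⟨e, hee⟩ := Finset.card_eq_one.1 hcs
    have hEe : E' = Finset.univ.erase e := by
      ext u
      constructor
      · intro hu
        refine Finset.mem_erase.2 ⟨?_, Finset.mem_univ _⟩
        intro h
        subst h
        have : u ∈ Finset.univ \ E' := hee ▸ Finset.mem_singleton_self u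
        exact (Finset.mem_sdiff.1 this).2 hu
      · intro hu
        rcases Finset.mem_erase.1 hu with ⟨hne, -⟩
        by_contra hc
        have : u ∈ Finset.univ \ E' := Finset.mem_sdiff.2 ⟨Finset.mem_univ _, hc⟩
        rw [hee] at this
        exact hne (Finset.mem_singleton.1 this)
    refine ⟨e, ?_, hEe.symm⟩
    apply (mem_Bset G s t).2
    rw [← hEe]
    exact hsplit
  
lemma ends_inj_of_split (hn4 : 4 ≤ Fintype.card G.V) {E' : Finset G.E}
    (hsplit : G.SplitState s t E') (hcard : E'.card = Fintype.card G.V - 2) :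
    ∀ e1 ∈ E', ∀ e2 ∈ E', e1 ≠ e2 → G.ends e1 ≠ G.ends e2 := by
  intro e1 he1 e2 he2 hne heq
  have hgeq : G.subgraph E' = G.subgraph (E'.erase e2) := by
    ext u v
    constructor
    · rintro ⟨huv, e, he, hend⟩
      by_cases h : e = e2
      · subst h
        exact ⟨huv, e1, Finset.mem_erase.2 ⟨hne, he1⟩, heq.symm ▸ hend⟩
      · exact ⟨huv, e, Finset.mem_erase.2 ⟨h, he⟩, hend⟩
    · rintro ⟨huv, e, he, hend⟩
      exact ⟨huv, e, Finset.mem_of_mem_erase he, hend⟩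
  have hsplit' : G.SplitState s t (E'.erase e2) := by
    rw [Multigraph.SplitState, ← hgeq]
    exact hsplit
  have := splitstate_card_ge G hsplit'
  rw [Finset.card_erase_of_mem he2, hcard] at this
  omega

lemma Nst_n2_upper (hG : G.Connected) (hn4 : 4 ≤ Fintype.card G.V)
    (hm : Fintype.card G.V < Fintype.card G.E)
    (hB : Fintype.card G.V - 2 ≤ (Bset G s t).card) :
    G.Nst s t (Fintype.card G.V - 2) ≤
      1 + (Fintype.card G.V - 2) * (Fintype.card G.E - Fintype.card G.V + 2) := by
  set n := Fintype.card G.V with hn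
  set m := Fintype.card G.E with hm'
  obtain ⟨hBcard, x, y, hxyne, hendsout⟩ := Bset_structure G s t hG hn4 hm hB
  set B := Bset G s t with hBdef
  have hNst : G.Nst s t (n - 2) = (Finset.univ.filter
      (fun E' : Finset G.E => E'.card = n - 2 ∧ G.SplitState s t E')).card := by
    simp [Multigraph.Nst]
  rw [hNst]
  set S := Finset.univ.filter
      (fun E' : Finset G.E => E'.card = n - 2 ∧ G.SplitState s t E') with hS
  have hsplitcard : S.card = (S.filter (fun E' => E' = B)).card
      + (S.filter (fun E' => ¬ E' = B)).card :=
    (Finset.card_filter_add_card_filter_not (fun E' => E' = B)).symm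
  have h1 : (S.filter (fun E' => E' = B)).card ≤ 1 := by
    apply Finset.card_le_one.2
    intro a ha b hb
    rw [(Finset.mem_filter.1 ha).2, (Finset.mem_filter.1 hb).2]
  have h2 : (S.filter (fun E' => ¬ E' = B)).card ≤ (n - 2) * (m - n + 2) := by
    have htarget : ((B.powersetCard 1) ×ˢ ((Finset.univ \ B).powersetCard 1)).card
        = (n - 2) * (m - n + 2) := by
      rw [Finset.card_product, Finset.card_powersetCard, Finset.card_powersetCard,
        Finset.card_sdiff_of_subset (Finset.subset_univ _), Finset.card_univ, ← hm', hBcard,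
        Nat.choose_one_right, Nat.choose_one_right]
      congr 1
      omega
    rw [← htarget]
    apply Finset.card_le_card_of_injOn (fun E' => (B \ E', E' \ B))
    · intro E' hE'
      rcases Finset.mem_filter.1 hE' with ⟨hE'S, hneB⟩
      rcases Finset.mem_filter.1 hE'S with ⟨-, hcard, hsplit⟩
      have hinj := ends_inj_of_split G s t hn4 hsplit hcard
      have hsd1 : (E' \ B).card ≤ 1 := by
        apply Finset.card_le_one.2
        intro a ha b hb
        rcases Finset.mem_sdiff.1 ha with ⟨haE, haB⟩
        rcases Finset.mem_sdiff.1 hb with ⟨hbE, hbB⟩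
        by_contra hab
        exact hinj a haE b hbE hab ((hendsout a haB).trans (hendsout b hbB).symm)
      have hsd2 : (E' \ B).card = 1 := by
        rcases Nat.lt_or_ge (E' \ B).card 1 with h | h
        · exfalso
          have hsub : E' ⊆ B := by
            rw [← Finset.sdiff_eq_empty_iff_subset]
            exact Finset.card_eq_zero.1 (by omega)
          exact hneB (Finset.eq_of_subset_of_card_le hsub (by omega))
        · omega
      have hi1 : (E' \ B).card + (E' ∩ B).card = E'.card := Finset.card_sdiff_add_card_inter E' B
      have hi2 : (B \ E').card + (B ∩ E').card = B.card := Finset.card_sdiff_add_card_inter B E'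
      have hicomm : (E' ∩ B).card = (B ∩ E').card := by rw [Finset.inter_comm]
      have hsd3 : (B \ E').card = 1 := by omega
      apply Finset.mem_product.2
      constructor
      · exact Finset.mem_powersetCard.2 ⟨Finset.sdiff_subset, hsd3⟩
      · refine Finset.mem_powersetCard.2 ⟨?_, hsd2⟩
        intro a ha
        exact Finset.mem_sdiff.2 ⟨Finset.mem_univ _, (Finset.mem_sdiff.1 ha).2⟩
    · intro E1 hE1 E2 hE2 heq
      rw [Prod.mk.injEq] at heq
      rcases heq with ⟨hq1, hq2⟩
      ext e
      constructor
      · intro h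
        by_cases heB : e ∈ B
        · have : e ∉ B \ E1 := fun hc => (Finset.mem_sdiff.1 hc).2 h
          rw [hq1] at this
          by_contra hc
          exact this (Finset.mem_sdiff.2 ⟨heB, hc⟩)
        · have : e ∈ E1 \ B := Finset.mem_sdiff.2 ⟨h, heB⟩
          rw [hq2] at this
          exact (Finset.mem_sdiff.1 this).1
      · intro h
        by_cases heB : e ∈ B
        · have : e ∉ B \ E2 := fun hc => (Finset.mem_sdiff.1 hc).2 h
          rw [← hq1] at this
          by_contra hc
          exact this (Finset.mem_sdiff.2 ⟨heB, hc⟩)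
        · have : e ∈ E2 \ B := Finset.mem_sdiff.2 ⟨h, heB⟩
          rw [← hq2] at this
          exact (Finset.mem_sdiff.1 this).1
  omega

end Case2Bounds

end SRelProof

namespace SRelProof

open Finset SimpleGraph Multigraph
open scoped Classical

section Case2Main

lemma arith_aux (n m : ℕ) (hn : 4 ≤ n) (hm : n < m) :
    1 + (n - 2) * (m - n + 2) < (m - n + 1) + 2 + (n - 3) * (2 * (m - n + 1)) := by
  obtain ⟨k, rfl⟩ : ∃ k, n = k + 4 := ⟨n - 4, by omega⟩
  obtain ⟨b, rfl⟩ : ∃ b, m = (k + 4) + (b + 1) := ⟨m - (k + 4) - 1, by omega⟩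
  have e1 : k + 4 - 2 = k + 2 := by omega
  have e2 : k + 4 + (b + 1) - (k + 4) + 2 = b + 3 := by omega
  have e3 : k + 4 + (b + 1) - (k + 4) + 1 = b + 2 := by omega
  have e4 : k + 4 - 3 = k + 1 := by omega
  rw [e1, e2, e3, e4]
  nlinarith [Nat.zero_le (k * b)]

variable (n m : ℕ) (hn : 4 ≤ n) (hm : n < m)

include hn hm in
lemma case2_main (G : Multigraph) (s t : G.V) (hG : G.Connected)
    (hV : Fintype.card G.V = n) (hE : Fintype.card G.E = m) (hst : s ≠ t)
    (hcase : n - 2 ≤ G.Nst s t (m - 1)) :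
    ∃ (H : Multigraph) (s' t' : H.V), H.Connected ∧ Fintype.card H.V = n ∧
      Fintype.card H.E = m ∧ s' ≠ t' ∧
      ∃ p : ℝ, 0 < p ∧ p < 1 ∧ G.sRel s t p < H.sRel s' t' p := by
  have h01 : 0 < n - 1 := by omega
  have h11 : 1 < n - 1 := by omega
  have hn0 : 0 < n := by omega
  set a := m - n + 1 with ha
  have ha2 : 2 ≤ a := by omega
  set H := Gnm2 n m 0 1 h01 h11 with hH
  set v : ℕ → H.V := vtx n hn0 with hv
  set π : H.E → ℕ := fun e =>
    if (e : Fin m).val < n - 1 then (e : Fin m).val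
    else if (e : Fin m).val = n - 1 then 0 else 1 with hπdef
  have hπ : ∀ e, π e < n - 1 := by
    intro e
    simp only [hπdef]
    split
    · omega
    · split <;> omega
  have hends : ∀ e, H.ends e = s(v (π e), v (π e + 1)) := by
    intro e
    show (Gnm2 n m 0 1 h01 h11).ends e = _
    simp only [Gnm2, hπdef]
    by_cases h : (e : Fin m).val < n - 1
    · rw [dif_pos h, if_pos h, hv, vtx_eq n hn0 _ (by omega), vtx_eq n hn0 _ (by omega)]
      rfl
    · by_cases h' : (e : Fin m).val = n - 1
      · rw [dif_neg h, if_neg h, if_pos h', if_pos h', hv,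
          vtx_eq n hn0 _ (by omega), vtx_eq n hn0 _ (by omega)]
        rfl
      · rw [dif_neg h, if_neg h, if_neg h', if_neg h', hv,
          vtx_eq n hn0 _ (by omega), vtx_eq n hn0 _ (by omega)]
        rfl
  have hinj := vtx_inj n hn0
  have hsurj := vtx_surj n hn0
  have hHconn : H.Connected := by
    apply path_connected H v π n (by omega) hπ hends hinj hsurj
    intro i hi
    refine ⟨(⟨i, by omega⟩ : Fin m), ?_⟩
    simp only [hπdef]
    exact if_pos hi
  set s' : H.V := v 0 with hs'
  set t' : H.V := v (n - 1) with ht'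
  have hst' : s' ≠ t' := by
    intro h
    have := hinj 0 (n-1) (by omega) (by omega) h
    omega
  have hcardV : Fintype.card H.V = n := Fintype.card_fin n
  have hcardE : Fintype.card H.E = m := Fintype.card_fin m
  -- building blocks for split states of H with n-2 edges
  set enc0 : Fin 2 → Fin m := fun d => if d.val = 0 then ⟨0, by omega⟩ else ⟨n-1, by omega⟩
    with henc0
  set enc1 : Fin a → Fin m := fun c =>
    if c.val = 0 then ⟨1, by omega⟩ else ⟨n - 1 + c.val, by have := c.isLt; omega⟩
    with henc1
  set base : Finset (Fin m) := Finset.univ.filter (fun e => 2 ≤ e.val ∧ e.val < n - 1)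
    with hbase
  have hmem_base : ∀ e : Fin m, e ∈ base ↔ 2 ≤ e.val ∧ e.val < n - 1 := by
    intro e
    simp [hbase]
  have henc0val : ∀ d : Fin 2, (enc0 d).val = 0 ∨ (enc0 d).val = n - 1 := by
    intro d
    simp only [henc0]
    split
    · exact Or.inl rfl
    · exact Or.inr rfl
  have henc1val : ∀ c : Fin a,
      ((enc1 c).val = 1 ∧ c.val = 0) ∨ (n ≤ (enc1 c).val ∧ (enc1 c).val = n - 1 + c.val) := by
    intro c
    by_cases h : c.val = 0
    · have he : (enc1 c).val = 1 := by
        simp only [henc1]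
        rw [if_pos h]
      exact Or.inl ⟨he, h⟩
    · have he : (enc1 c).val = n - 1 + c.val := by
        simp only [henc1]
        rw [if_neg h]
      exact Or.inr ⟨by rw [he]; omega, he⟩
  have hπ0 : ∀ d, π (enc0 d) = 0 := by
    intro d
    rcases henc0val d with h | h
    · simp only [hπdef]
      rw [if_pos (by omega), h]
    · simp only [hπdef]
      rw [if_neg (by omega), if_pos h]
  have hπ1 : ∀ c, π (enc1 c) = 1 := by
    intro c
    rcases henc1val c with ⟨h, -⟩ | ⟨h, -⟩
    · simp only [hπdef]
      rw [if_pos (by omega), h]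
    · simp only [hπdef]
      rw [if_neg (by omega), if_neg (by omega)]
  have hπbase : ∀ e ∈ base, π e = (e : Fin m).val := by
    intro e he
    rcases (hmem_base e).1 he with ⟨h1, h2⟩
    simp only [hπdef]
    rw [if_pos h2]
  have henc0nb : ∀ d, enc0 d ∉ base := by
    intro d hd
    rcases (hmem_base _).1 hd with ⟨h1, h2⟩
    rcases henc0val d with h | h <;> omega
  have henc1nb : ∀ c, enc1 c ∉ base := by
    intro c hc
    rcases (hmem_base _).1 hc with ⟨h1, h2⟩
    rcases henc1val c with ⟨h, -⟩ | ⟨h, -⟩ <;> omega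
  have henc01 : ∀ d c, enc0 d ≠ enc1 c := by
    intro d c heq
    have := congrArg Fin.val heq
    rcases henc0val d with h | h <;> rcases henc1val c with ⟨h', -⟩ | ⟨h', -⟩ <;> omega
  have henc0inj : ∀ d d', enc0 d = enc0 d' → d = d' := by
    intro d d' heq
    have hveq := congrArg Fin.val heq
    by_cases h : d.val = 0 <;> by_cases h' : d'.val = 0
    · exact Fin.ext (by omega)
    · simp only [henc0, if_pos h, if_neg h'] at hveq
      omega
    · simp only [henc0, if_neg h, if_pos h'] at hveq
      omega
    · have hd := d.isLt
      have hd' := d'.isLt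
      exact Fin.ext (by omega)
  have henc1inj : ∀ c c', enc1 c = enc1 c' → c = c' := by
    intro c c' heq
    have hveq := congrArg Fin.val heq
    rcases henc1val c with ⟨h, h0⟩ | ⟨h, h0⟩ <;> rcases henc1val c' with ⟨h', h0'⟩ | ⟨h', h0'⟩
    · exact Fin.ext (by omega)
    · omega
    · omega
    · exact Fin.ext (by omega)
  have hbasecard : base.card = n - 3 := by
    have : base.card = (Finset.Ico 2 (n-1)).card := by
      apply Finset.card_bij (fun (e : Fin m) (_ : e ∈ base) => (e : Fin m).val)
      · intro e he
        rcases (hmem_base e).1 he with ⟨h1, h2⟩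
        exact Finset.mem_Ico.2 ⟨h1, h2⟩
      · intro e1 he1 e2 he2 heq
        exact Fin.ext heq
      · intro i hi
        rcases Finset.mem_Ico.1 hi with ⟨h1, h2⟩
        exact ⟨⟨i, by omega⟩, (hmem_base _).2 ⟨h1, h2⟩, rfl⟩
    rw [this, Nat.card_Ico]
    omega
  -- the three families of split states
  set ιA : Fin a → Finset (Fin m) := fun c => insert (enc1 c) base with hιA
  set ιB : Fin 2 → Finset (Fin m) := fun d => insert (enc0 d) base with hιB
  set ιC : Fin (n-3) × Fin 2 × Fin a → Finset (Fin m) := fun x =>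
    insert (enc0 x.2.1) (insert (enc1 x.2.2)
      (base.erase ⟨x.1.val + 2, by have := x.1.isLt; omega⟩)) with hιC
  set ι : (Fin a ⊕ Fin 2 ⊕ (Fin (n-3) × Fin 2 × Fin a)) → Finset (Fin m) :=
    Sum.elim ιA (Sum.elim ιB ιC) with hι
  -- membership descriptions
  have hmemA : ∀ c e, e ∈ ιA c ↔ e = enc1 c ∨ e ∈ base := by
    intro c e
    simp [hιA]
  have hmemB : ∀ d e, e ∈ ιB d ↔ e = enc0 d ∨ e ∈ base := by
    intro d e
    simp [hιB]
  have hmemC : ∀ x e, e ∈ ιC x ↔ e = enc0 x.2.1 ∨ e = enc1 x.2.2 ∨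
      (e ∈ base ∧ (e : Fin m).val ≠ x.1.val + 2) := by
    intro x e
    simp only [hιC, Finset.mem_insert, Finset.mem_erase]
    constructor
    · rintro (h | h | ⟨h1, h2⟩)
      · exact Or.inl h
      · exact Or.inr (Or.inl h)
      · refine Or.inr (Or.inr ⟨h2, ?_⟩)
        intro hval
        exact h1 (Fin.ext hval)
    · rintro (h | h | ⟨h1, h2⟩)
      · exact Or.inl h
      · exact Or.inr (Or.inl h)
      · refine Or.inr (Or.inr ⟨?_, h1⟩)
        intro heq
        exact h2 (congrArg Fin.val heq)
  -- each family member is a split state of size n-2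
  have hsplitA : ∀ c, H.SplitState s' t' (ιA c) := by
    intro c
    apply path_split H v π n (by omega) hπ hends hinj hsurj _ 0 (by omega)
    · intro e he
      rcases (hmemA c e).1 he with rfl | hb
      · rw [hπ1]; omega
      · rw [hπbase e hb]
        rcases (hmem_base e).1 hb with ⟨h1, -⟩
        omega
    · intro i hi hine
      rcases Nat.lt_or_ge i 2 with h2 | h2
      · have : i = 1 := by omega
        subst this
        exact ⟨enc1 c, (hmemA c _).2 (Or.inl rfl), hπ1 c⟩
      · refine ⟨⟨i, by omega⟩, (hmemA c _).2 (Or.inr ((hmem_base _).2 ⟨h2, hi⟩)), ?_⟩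
        rw [hπbase _ ((hmem_base _).2 ⟨h2, hi⟩)]
  have hsplitB : ∀ d, H.SplitState s' t' (ιB d) := by
    intro d
    apply path_split H v π n (by omega) hπ hends hinj hsurj _ 1 (by omega)
    · intro e he
      rcases (hmemB d e).1 he with rfl | hb
      · rw [hπ0]; omega
      · rw [hπbase e hb]
        rcases (hmem_base e).1 hb with ⟨h1, -⟩
        omega
    · intro i hi hine
      rcases Nat.lt_or_ge i 2 with h2 | h2
      · have : i = 0 := by omega
        subst this
        exact ⟨enc0 d, (hmemB d _).2 (Or.inl rfl), hπ0 d⟩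
      · refine ⟨⟨i, by omega⟩, (hmemB d _).2 (Or.inr ((hmem_base _).2 ⟨h2, hi⟩)), ?_⟩
        rw [hπbase _ ((hmem_base _).2 ⟨h2, hi⟩)]
  have hsplitC : ∀ x, H.SplitState s' t' (ιC x) := by
    intro x
    apply path_split H v π n (by omega) hπ hends hinj hsurj _ (x.1.val + 2)
      (by have := x.1.isLt; omega)
    · intro e he
      rcases (hmemC x e).1 he with rfl | rfl | ⟨hb, hval⟩
      · rw [hπ0]; omega
      · rw [hπ1]; omega
      · rw [hπbase e hb]
        exact hval
    · intro i hi hine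
      rcases Nat.lt_or_ge i 2 with h2 | h2
      · rcases Nat.lt_or_ge i 1 with h1 | h1
        · have : i = 0 := by omega
          subst this
          exact ⟨enc0 x.2.1, (hmemC x _).2 (Or.inl rfl), hπ0 _⟩
        · have : i = 1 := by omega
          subst this
          exact ⟨enc1 x.2.2, (hmemC x _).2 (Or.inr (Or.inl rfl)), hπ1 _⟩
      · refine ⟨⟨i, by omega⟩, (hmemC x _).2 (Or.inr (Or.inr
          ⟨(hmem_base _).2 ⟨h2, hi⟩, by show i ≠ x.1.val + 2; omega⟩)), ?_⟩
        rw [hπbase _ ((hmem_base _).2 ⟨h2, hi⟩)]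
  have hcardA : ∀ c, (ιA c).card = n - 2 := by
    intro c
    rw [hιA]
    simp only
    rw [Finset.card_insert_of_notMem (henc1nb c), hbasecard]
    omega
  have hcardB : ∀ d, (ιB d).card = n - 2 := by
    intro d
    rw [hιB]
    simp only
    rw [Finset.card_insert_of_notMem (henc0nb d), hbasecard]
    omega
  have hcardC : ∀ x, (ιC x).card = n - 2 := by
    intro x
    rw [hιC]
    simp only
    have hj : (⟨x.1.val + 2, by have := x.1.isLt; omega⟩ : Fin m) ∈ base :=
      (hmem_base _).2 ⟨by show 2 ≤ x.1.val + 2; omega,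
        by show x.1.val + 2 < n - 1; have := x.1.isLt; omega⟩
    rw [Finset.card_insert_of_notMem, Finset.card_insert_of_notMem,
      Finset.card_erase_of_mem hj, hbasecard]
    · omega
    · intro hc
      exact henc1nb x.2.2 (Finset.mem_of_mem_erase hc)
    · intro hc
      rcases Finset.mem_insert.1 hc with h | h
      · exact henc01 x.2.1 x.2.2 h
      · exact henc0nb x.2.1 (Finset.mem_of_mem_erase h)
  -- families are injective and pairwise distinct
  have hP0A : ∀ c, ¬ ∃ e ∈ ιA c, π e = 0 := by
    rintro c ⟨e, he, hpe⟩
    rcases (hmemA c e).1 he with rfl | hb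
    · rw [hπ1] at hpe; omega
    · rw [hπbase e hb] at hpe
      rcases (hmem_base e).1 hb with ⟨h1, -⟩
      omega
  have hP1B : ∀ d, ¬ ∃ e ∈ ιB d, π e = 1 := by
    rintro d ⟨e, he, hpe⟩
    rcases (hmemB d e).1 he with rfl | hb
    · rw [hπ0] at hpe; omega
    · rw [hπbase e hb] at hpe
      rcases (hmem_base e).1 hb with ⟨h1, -⟩
      omega
  have hP0C : ∀ x, ∃ e ∈ ιC x, π e = 0 := fun x => ⟨enc0 x.2.1, (hmemC x _).2 (Or.inl rfl), hπ0 _⟩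
  have hP1C : ∀ x, ∃ e ∈ ιC x, π e = 1 :=
    fun x => ⟨enc1 x.2.2, (hmemC x _).2 (Or.inr (Or.inl rfl)), hπ1 _⟩
  have hP0B : ∀ d, ∃ e ∈ ιB d, π e = 0 := fun d => ⟨enc0 d, (hmemB d _).2 (Or.inl rfl), hπ0 _⟩
  have hP1A : ∀ c, ∃ e ∈ ιA c, π e = 1 := fun c => ⟨enc1 c, (hmemA c _).2 (Or.inl rfl), hπ1 _⟩
  have hιinj : ∀ x1 x2, ι x1 = ι x2 → x1 = x2 := by
    have hinjA : ∀ c c', ιA c = ιA c' → c = c' := by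
      intro c c' heq
      have h1 : enc1 c ∈ ιA c' := heq ▸ (hmemA c _).2 (Or.inl rfl)
      rcases (hmemA c' _).1 h1 with h | h
      · rw [henc1inj _ _ h]
      · exact absurd h (henc1nb c)
    have hinjB : ∀ d d', ιB d = ιB d' → d = d' := by
      intro d d' heq
      have h1 : enc0 d ∈ ιB d' := heq ▸ (hmemB d _).2 (Or.inl rfl)
      rcases (hmemB d' _).1 h1 with h | h
      · rw [henc0inj _ _ h]
      · exact absurd h (henc0nb d)
    have hinjC : ∀ x x', ιC x = ιC x' → x = x' := by
      intro x x' heq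
      have h0 : enc0 x.2.1 ∈ ιC x' := heq ▸ (hmemC x _).2 (Or.inl rfl)
      have hd : x.2.1 = x'.2.1 := by
        rcases (hmemC x' _).1 h0 with h | h | ⟨h, -⟩
        · exact henc0inj _ _ h
        · exact absurd h (henc01 _ _)
        · exact absurd h (henc0nb _)
      have h1 : enc1 x.2.2 ∈ ιC x' := heq ▸ (hmemC x _).2 (Or.inr (Or.inl rfl))
      have hc : x.2.2 = x'.2.2 := by
        rcases (hmemC x' _).1 h1 with h | h | ⟨h, -⟩
        · exact absurd h.symm (henc01 _ _)
        · exact henc1inj _ _ h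
        · exact absurd h (henc1nb _)
      have hi : x.1 = x'.1 := by
        by_contra hne
        have hneval : x.1.val ≠ x'.1.val := fun h => hne (Fin.ext h)
        have hmem1 : (⟨x.1.val + 2, by have := x.1.isLt; omega⟩ : Fin m) ∈ ιC x := by
          rw [heq]
          apply (hmemC x' _).2
          refine Or.inr (Or.inr ⟨(hmem_base _).2 ⟨by show 2 ≤ x.1.val + 2; omega,
            by show x.1.val + 2 < n - 1; have := x.1.isLt; omega⟩, ?_⟩)
          show x.1.val + 2 ≠ x'.1.val + 2
          omega
        rcases (hmemC x _).1 hmem1 with h | h | ⟨-, h⟩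
        · have hval : (enc0 x.2.1).val = x.1.val + 2 := (congrArg Fin.val h).symm
          rcases henc0val x.2.1 with hh | hh <;> omega
        · have hval : (enc1 x.2.2).val = x.1.val + 2 := (congrArg Fin.val h).symm
          rcases henc1val x.2.2 with ⟨hh, -⟩ | ⟨hh, -⟩
          · omega
          · have := x.2.2.isLt
            have h1 := x.1.isLt
            omega
        · exact h rfl
      exact Prod.ext hi (Prod.ext hd hc)
    rintro (c | d | x) (c' | d' | x') heq <;> simp only [hι, Sum.elim_inl, Sum.elim_inr] at heq
    · rw [hinjA _ _ heq]
    · exact absurd (heq ▸ hP0B d') (hP0A c)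
    · exact absurd (heq ▸ hP0C x') (hP0A c)
    · exact absurd (heq.symm ▸ hP0B d) (hP0A c')
    · rw [hinjB _ _ heq]
    · exact absurd (heq ▸ hP1C x') (hP1B d)
    · exact absurd (heq.symm ▸ hP0C x) (hP0A c')
    · exact absurd (heq.symm ▸ hP1C x) (hP1B d')
    · rw [hinjC _ _ heq]
  -- the counting
  have hNstH : a + 2 + (n - 3) * (2 * a) ≤ H.Nst s' t' (n - 2) := by
    have hNst : H.Nst s' t' (n - 2) = (Finset.univ.filter
        (fun E' : Finset H.E => E'.card = n - 2 ∧ H.SplitState s' t' E')).card := by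
      simp [Multigraph.Nst]
    rw [hNst]
    have hcardI : Fintype.card (Fin a ⊕ Fin 2 ⊕ (Fin (n-3) × Fin 2 × Fin a))
        = a + 2 + (n - 3) * (2 * a) := by
      simp [Fintype.card_sum, Fintype.card_prod]
      ring
    rw [← hcardI, ← Finset.card_univ]
    apply Finset.card_le_card_of_injOn ι
    · rintro (c | d | x) -
      · exact Finset.mem_coe.2 ((@Finset.mem_filter _ (fun E' : Finset H.E => E'.card = n - 2 ∧
          H.SplitState s' t' E') (fun _ => instDecidableAnd) _ _).2 ⟨Finset.mem_univ (ι (Sum.inl c)), hcardA c, hsplitA c⟩)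
      · exact Finset.mem_coe.2 ((@Finset.mem_filter _ (fun E' : Finset H.E => E'.card = n - 2 ∧
          H.SplitState s' t' E') (fun _ => instDecidableAnd) _ _).2 ⟨Finset.mem_univ (ι (Sum.inr (Sum.inl d))), hcardB d, hsplitB d⟩)
      · exact Finset.mem_coe.2 ((@Finset.mem_filter _ (fun E' : Finset H.E => E'.card = n - 2 ∧
          H.SplitState s' t' E') (fun _ => instDecidableAnd) _ _).2 ⟨Finset.mem_univ (ι (Sum.inr (Sum.inr x))), hcardC x, hsplitC x⟩)
    · intro x1 _ x2 _ heq
      exact hιinj x1 x2 heq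
  -- upper bound for G
  have hBcard : n - 2 ≤ (Bset G s t).card := by
    rw [← Nst_m1_eq_Bcard G s t (by omega), hE]
    exact hcase
  have hNstG : G.Nst s t (n - 2) ≤ 1 + (n - 2) * (m - n + 2) := by
    have := Nst_n2_upper G s t hG (by omega) (by omega) (by rw [hV]; exact hBcard)
    rw [hV, hE] at this
    exact this
  -- compare
  have harith : 1 + (n - 2) * (m - n + 2) < a + 2 + (n - 3) * (2 * a) := by
    rw [ha]
    exact arith_aux n m hn hm
  refine ⟨H, s', t', hHconn, hcardV, hcardE, hst', ?_⟩
  apply sRel_lt_of_coeff_low G H s t s' t' (by rw [hcardE, hE]) (n - 2) (by rw [hE]; omega)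
  · intro i hi
    apply Nst_eq_zero_of_small
    rw [hV]
    omega
  · intro i hi
    apply Nst_eq_zero_of_small
    rw [hcardV]
    omega
  · exact lt_of_le_of_lt hNstG (lt_of_lt_of_le harith hNstH)

end Case2Main

end SRelProof
/-- If `n ≥ 4` and `m > n`, then there is no optimal `(n,m)`-graph: for
every connected `(n,m)`-multigraph `G` with distinct terminals `s, t` there is a connected
`(n,m)`-multigraph `H` with distinct terminals `s', t'` and some `p ∈ (0,1)` with
`sRel(H,s',t';p) > sRel(G,s,t;p)`. -/
theorem no_optimal_of_four_le_of_lt (n m : ℕ) (hn : 4 ≤ n) (hm : n < m)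
    (G : Multigraph) (s t : G.V) (hG : G.Connected)
    (hV : Fintype.card G.V = n) (hE : Fintype.card G.E = m) (hst : s ≠ t) :
    ∃ (H : Multigraph) (s' t' : H.V), H.Connected ∧ Fintype.card H.V = n ∧
      Fintype.card H.E = m ∧ s' ≠ t' ∧
      ∃ p : ℝ, 0 < p ∧ p < 1 ∧ G.sRel s t p < H.sRel s' t' p := by
  rcases Nat.lt_or_ge (G.Nst s t (m - 1)) (n - 2) with hcase | hcase
  · exact SRelProof.case1_main n m hn hm G s t hG hV hE hst hcase
  · exact SRelProof.case2_main n m hn hm G s t hG hV hE hst hcase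
end

section
/- Let m ≥ 2 and 1 ≤ a ≤ m-1, and let B be the multigraph on vertices s, v, t consisting of a bundle of a parallel edges between s and v and a bundle of m-a parallel edges between v and t, with terminals s and t. Then for all p ∈ [0,1], sRel(B,s,t;p) = (1-p)^a + (1-p)^{m-a} - 2(1-p)^m. Moreover, for all p ∈ (0,1) and all a with 2 ≤ a ≤ m-a, we have (1-p)^{a-1} + (1-p)^{m-a+1} > (1-p)^a + (1-p)^{m-a}; hence among all such graphs B, the split reliability is uniformly largest exactly when a = 1 or a = m-1. -/
open Finset

private lemma reach_pres {V : Type*} {G : SimpleGraph V} (P : V → Prop)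
    (h : ∀ x y, G.Adj x y → (P x ↔ P y)) {u v : V} (huv : G.Reachable u v) :
    P u ↔ P v := by
  obtain ⟨w⟩ := huv
  induction w with
  | nil => rfl
  | cons hadj _ ih => exact (h _ _ hadj).trans ih

namespace Multigraph

lemma db_ends_lt {a b : ℕ} {e : Fin (a+b)} (hea : e.val < a) :
    (doubleBundle a b).ends e = s((0:Fin 3),(1:Fin 3)) := by
  simp [doubleBundle, hea]

lemma db_ends_ge {a b : ℕ} {e : Fin (a+b)} (hea : ¬ e.val < a) :
    (doubleBundle a b).ends e = s((1:Fin 3),(2:Fin 3)) := by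
  simp [doubleBundle, hea]

lemma db_adj {a b : ℕ} {E' : Finset (Fin (a+b))} {u v : Fin 3}
    (h : ((doubleBundle a b).subgraph E').Adj u v) :
    (s(u,v) = s((0:Fin 3),(1:Fin 3)) ∧ ∃ e ∈ E', e.val < a) ∨
    (s(u,v) = s((1:Fin 3),(2:Fin 3)) ∧ ∃ e ∈ E', ¬ e.val < a) := by
  obtain ⟨hne, e, he, hends⟩ := h
  by_cases hea : e.val < a
  · exact Or.inl ⟨((db_ends_lt hea).symm.trans hends).symm, e, he, hea⟩
  · exact Or.inr ⟨((db_ends_ge hea).symm.trans hends).symm, e, he, hea⟩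

lemma db_adj01 {a b : ℕ} {E' : Finset (Fin (a+b))} {e : Fin (a+b)}
    (he : e ∈ E') (hea : e.val < a) :
    ((doubleBundle a b).subgraph E').Adj (0 : Fin 3) (1 : Fin 3) :=
  ⟨(by decide : (0:Fin 3) ≠ (1:Fin 3)), e, he, db_ends_lt hea⟩

lemma db_adj12 {a b : ℕ} {E' : Finset (Fin (a+b))} {e : Fin (a+b)}
    (he : e ∈ E') (hea : ¬ e.val < a) :
    ((doubleBundle a b).subgraph E').Adj (1 : Fin 3) (2 : Fin 3) :=
  ⟨(by decide : (1:Fin 3) ≠ (2:Fin 3)), e, he, db_ends_ge hea⟩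

lemma db_split {a b : ℕ} (E' : Finset (Fin (a+b))) :
    (doubleBundle a b).SplitState (0 : Fin 3) (2 : Fin 3) E' ↔
      (E'.Nonempty ∧ ∀ e ∈ E', e.val < a) ∨ (E'.Nonempty ∧ ∀ e ∈ E', ¬ e.val < a) := by
  constructor
  · rintro ⟨hnr, hall⟩
    by_cases hX : ∃ e ∈ E', e.val < a
    · by_cases hY : ∃ e ∈ E', ¬ e.val < a
      · exfalso; apply hnr
        obtain ⟨e1, he1, h1⟩ := hX
        obtain ⟨e2, he2, h2⟩ := hY
        exact (db_adj01 he1 h1).reachable.trans (db_adj12 he2 h2).reachable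
      · push_neg at hY
        obtain ⟨e, he, hea⟩ := hX
        exact Or.inl ⟨⟨e, he⟩, fun e' he' => by have := hY e' he'; omega⟩
    · by_cases hY : ∃ e ∈ E', ¬ e.val < a
      · obtain ⟨e, he, hea⟩ := hY
        push_neg at hX
        exact Or.inr ⟨⟨e, he⟩, fun e' he' => by have := hX e' he'; omega⟩
      · exfalso
        have hnoadj : ∀ x y : Fin 3, ¬ ((doubleBundle a b).subgraph E').Adj x y := by
          intro x y hxy
          obtain ⟨hne, e, he, _⟩ := hxy
          by_cases hea : e.val < a
          · exact hX ⟨e, he, hea⟩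
          · exact hY ⟨e, he, hea⟩
        have key : ∀ u v : Fin 3, ((doubleBundle a b).subgraph E').Reachable u v → u = v := by
          intro u v huv
          have := reach_pres (fun x : Fin 3 => x = v) (fun x y hxy => absurd hxy (hnoadj x y)) huv
          exact this.mpr rfl
        rcases hall (1 : Fin 3) with h | h
        · exact absurd (key _ _ h) (by decide)
        · exact absurd (key _ _ h) (by decide)
  · rintro (⟨⟨e0, he0⟩, hall⟩ | ⟨⟨e0, he0⟩, hall⟩)
    · refine ⟨?_, ?_⟩
      · intro hr
        have hpres : ∀ x y : Fin 3, ((doubleBundle a b).subgraph E').Adj x y →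
            ((x = (0:Fin 3) ∨ x = (1:Fin 3)) ↔ (y = (0:Fin 3) ∨ y = (1:Fin 3))) := by
          intro x y hxy
          rcases db_adj hxy with ⟨hs, -⟩ | ⟨hs, e, he, hea⟩
          · rw [Sym2.eq_iff] at hs
            rcases hs with ⟨hx, hy⟩ | ⟨hx, hy⟩ <;> subst hx <;> subst hy <;> simp
          · exact absurd (hall e he) hea
        have := reach_pres (fun x : Fin 3 => x = (0:Fin 3) ∨ x = (1:Fin 3)) hpres hr
        simp at this
      · intro v
        fin_cases v
        · exact Or.inl (SimpleGraph.Reachable.refl _)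
        · exact Or.inl (db_adj01 he0 (hall e0 he0)).symm.reachable
        · exact Or.inr (SimpleGraph.Reachable.refl _)
    · refine ⟨?_, ?_⟩
      · intro hr
        have hpres : ∀ x y : Fin 3, ((doubleBundle a b).subgraph E').Adj x y →
            ((x = (1:Fin 3) ∨ x = (2:Fin 3)) ↔ (y = (1:Fin 3) ∨ y = (2:Fin 3))) := by
          intro x y hxy
          rcases db_adj hxy with ⟨hs, e, he, hea⟩ | ⟨hs, -⟩
          · exact absurd hea (hall e he)
          · rw [Sym2.eq_iff] at hs
            rcases hs with ⟨hx, hy⟩ | ⟨hx, hy⟩ <;> subst hx <;> subst hy <;> simp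
        have := reach_pres (fun x : Fin 3 => x = (1:Fin 3) ∨ x = (2:Fin 3)) hpres hr
        exact absurd (this.mpr (Or.inr rfl)) (by decide)
      · intro v
        fin_cases v
        · exact Or.inl (SimpleGraph.Reachable.refl _)
        · exact Or.inr (db_adj12 he0 (hall e0 he0)).reachable
        · exact Or.inr (SimpleGraph.Reachable.refl _)

end Multigraph

private lemma sum_powerset_w (n : ℕ) (S : Finset (Fin n)) (p : ℝ) :
    ∑ E' ∈ S.powerset, p ^ E'.card * (1-p) ^ (n - E'.card) = (1-p) ^ (n - S.card) := by
  have hS : S.card ≤ n := by simpa using Finset.card_le_card (Finset.subset_univ S)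
  have h1 : ∀ E' ∈ S.powerset, p ^ E'.card * (1-p) ^ (n - E'.card)
      = (1-p) ^ (n - S.card) * (p ^ E'.card * (1-p) ^ (S.card - E'.card)) := by
    intro E' hE'
    rw [Finset.mem_powerset] at hE'
    have hc : E'.card ≤ S.card := Finset.card_le_card hE'
    have hn : n - E'.card = (n - S.card) + (S.card - E'.card) := by omega
    rw [hn, pow_add]; ring
  rw [Finset.sum_congr rfl h1, ← Finset.mul_sum]
  have h2 : ∑ E' ∈ S.powerset, p ^ E'.card * (1-p) ^ (S.card - E'.card) = 1 := by
    have hpa := Finset.prod_add (fun _ : Fin n => p) (fun _ : Fin n => 1 - p) S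
    simp only [Finset.prod_const] at hpa
    have h3 : ∑ E' ∈ S.powerset, p ^ E'.card * (1-p) ^ (S.card - E'.card)
        = ∑ t ∈ S.powerset, p ^ t.card * (1-p) ^ ((S \ t).card) :=
      Finset.sum_congr rfl (fun t ht => by
        rw [Finset.card_sdiff_of_subset (Finset.mem_powerset.mp ht)])
    rw [h3, ← hpa]
    norm_num
  rw [h2, mul_one]

private lemma card_filter_lt (n a : ℕ) (h : a ≤ n) :
    ((Finset.univ : Finset (Fin n)).filter (fun e => e.val < a)).card = a := by
  have heq : ((Finset.univ : Finset (Fin n)).filter (fun e => e.val < a))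
      = (Finset.range a).attachFin (fun m hm => lt_of_lt_of_le (Finset.mem_range.mp hm) h) := by
    ext e
    simp [Finset.mem_attachFin, Finset.mem_range]
  rw [heq, Finset.card_attachFin, Finset.card_range]

private lemma sum_split_cond (n : ℕ) (P : Fin n → Prop) [DecidablePred P] (p : ℝ) :
    ∑ E' : Finset (Fin n),
        (if E'.Nonempty ∧ (∀ e ∈ E', P e) then p ^ E'.card * (1-p) ^ (n - E'.card) else 0)
      = (1-p) ^ (n - ((Finset.univ : Finset (Fin n)).filter P).card) - (1-p) ^ n := by
  classical
  rw [← Finset.sum_filter]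
  have hset : (Finset.univ : Finset (Finset (Fin n))).filter
        (fun E' => E'.Nonempty ∧ ∀ e ∈ E', P e)
      = (((Finset.univ : Finset (Fin n)).filter P).powerset).erase ∅ := by
    ext E'
    simp [Finset.mem_powerset, Finset.subset_iff, Finset.nonempty_iff_ne_empty, and_comm]
  rw [hset, Finset.sum_erase_eq_sub (Finset.empty_mem_powerset _), sum_powerset_w]
  simp

namespace Multigraph

lemma sRel_db (a b : ℕ) (p : ℝ) :
    (doubleBundle a b).sRel (0:Fin 3) (2:Fin 3) p
      = ((1-p)^b - (1-p)^(a+b)) + ((1-p)^a - (1-p)^(a+b)) := by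
  classical
  have hcard : Fintype.card (doubleBundle a b).E = a + b := by
    have : Fintype.card (doubleBundle a b).E = Fintype.card (Fin (a+b)) := rfl
    rw [this, Fintype.card_fin]
  unfold sRel
  rw [hcard]
  have hsplit : ∀ E' : Finset (Fin (a+b)),
      (if (doubleBundle a b).SplitState (0:Fin 3) (2:Fin 3) E' then
          p ^ E'.card * (1-p) ^ (a + b - E'.card) else 0)
      = (if E'.Nonempty ∧ (∀ e ∈ E', e.val < a) then
            p ^ E'.card * (1-p) ^ (a + b - E'.card) else 0)
        + (if E'.Nonempty ∧ (∀ e ∈ E', ¬ e.val < a) then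
            p ^ E'.card * (1-p) ^ (a + b - E'.card) else 0) := by
    intro E'
    rw [if_congr (db_split E') rfl rfl]
    by_cases hP : E'.Nonempty ∧ (∀ e ∈ E', e.val < a)
    · have hQ : ¬ (E'.Nonempty ∧ ∀ e ∈ E', ¬ e.val < a) := by
        rintro ⟨⟨e, he⟩, hq⟩
        exact hq e he (hP.2 e he)
      rw [if_pos (Or.inl hP), if_pos hP, if_neg hQ, add_zero]
    · by_cases hQ : E'.Nonempty ∧ (∀ e ∈ E', ¬ e.val < a)
      · rw [if_pos (Or.inr hQ), if_neg hP, if_pos hQ, zero_add]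
      · rw [if_neg (by tauto), if_neg hP, if_neg hQ, add_zero]
  have hshow : (∑ E' : Finset (doubleBundle a b).E,
      if (doubleBundle a b).SplitState (0:Fin 3) (2:Fin 3) E' then
        p ^ E'.card * (1-p) ^ (a + b - E'.card) else 0)
      = ∑ E' : Finset (Fin (a+b)),
        ((if E'.Nonempty ∧ (∀ e ∈ E', e.val < a) then
            p ^ E'.card * (1-p) ^ (a + b - E'.card) else 0)
        + (if E'.Nonempty ∧ (∀ e ∈ E', ¬ e.val < a) then
            p ^ E'.card * (1-p) ^ (a + b - E'.card) else 0)) :=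
    Finset.sum_congr rfl (fun E' _ => hsplit E')
  rw [hshow, Finset.sum_add_distrib]
  rw [sum_split_cond (a+b) (fun e => e.val < a) p,
      sum_split_cond (a+b) (fun e => ¬ e.val < a) p]
  have hc1 : ((Finset.univ : Finset (Fin (a+b))).filter (fun e => e.val < a)).card = a :=
    card_filter_lt (a+b) a (Nat.le_add_right a b)
  have hc2 : ((Finset.univ : Finset (Fin (a+b))).filter (fun e => ¬ e.val < a)).card = b := by
    have := Finset.card_filter_add_card_filter_not
      (s := (Finset.univ : Finset (Fin (a+b)))) (p := fun e => e.val < a)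
    simp only [Finset.card_univ, Fintype.card_fin] at this
    omega
  rw [hc1, hc2]
  congr 1 <;> congr 2 <;> omega

end Multigraph

private lemma pow_key_id (x : ℝ) (c d : ℕ) :
    x + x^(c+d+1) - x^(c+1) - x^(d+1) = x * ((1 - x^c) * (1 - x^d)) := by
  simp only [pow_succ, pow_add]; ring

private lemma pow_ineq {x : ℝ} (hx0 : 0 ≤ x) (hx1 : x ≤ 1) (c d : ℕ) :
    x^(c+1) + x^(d+1) ≤ x + x^(c+d+1) := by
  have hc : x^c ≤ 1 := pow_le_one₀ hx0 hx1
  have hd : x^d ≤ 1 := pow_le_one₀ hx0 hx1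
  nlinarith [pow_key_id x c d, mul_nonneg (mul_nonneg hx0 (sub_nonneg.2 hc)) (sub_nonneg.2 hd)]

private lemma pow_ineq_strict {x : ℝ} (hx0 : 0 < x) (hx1 : x < 1) (c d : ℕ)
    (hc : 1 ≤ c) (hd : 1 ≤ d) :
    x^(c+1) + x^(d+1) < x + x^(c+d+1) := by
  have hc' : x^c < 1 := pow_lt_one₀ hx0.le hx1 (by omega)
  have hd' : x^d < 1 := pow_lt_one₀ hx0.le hx1 (by omega)
  nlinarith [pow_key_id x c d, mul_pos (mul_pos hx0 (sub_pos.2 hc')) (sub_pos.2 hd')]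


/-- For the graph `B` on vertices `s, v, t` with a bundle of `a` edges
between `s` and `v` and `m-a` edges between `v` and `t` (terminals `s, t`):
`sRel(B,s,t;p) = (1-p)^a + (1-p)^{m-a} - 2(1-p)^m`; moreover for `2 ≤ a ≤ m-a` and
`p ∈ (0,1)`, `(1-p)^{a-1} + (1-p)^{m-a+1} > (1-p)^a + (1-p)^{m-a}`; hence the split
reliability is uniformly largest exactly when `a = 1` or `a = m-1`. -/
theorem sRel_doubleBundle (m : ℕ) (hm : 2 ≤ m) :
    (∀ a : ℕ, 1 ≤ a → a ≤ m - 1 → ∀ p : ℝ, 0 ≤ p → p ≤ 1 →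
      (Multigraph.doubleBundle a (m - a)).sRel (0 : Fin 3) (2 : Fin 3) p =
        (1 - p) ^ a + (1 - p) ^ (m - a) - 2 * (1 - p) ^ m) ∧
    (∀ a : ℕ, 2 ≤ a → a ≤ m - a → ∀ p : ℝ, 0 < p → p < 1 →
      (1 - p) ^ a + (1 - p) ^ (m - a) < (1 - p) ^ (a - 1) + (1 - p) ^ (m - a + 1)) ∧
    (∀ a : ℕ, 1 ≤ a → a ≤ m - 1 →
      ((∀ b : ℕ, 1 ≤ b → b ≤ m - 1 → ∀ p : ℝ, 0 < p → p < 1 →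
          (Multigraph.doubleBundle b (m - b)).sRel (0 : Fin 3) (2 : Fin 3) p ≤
            (Multigraph.doubleBundle a (m - a)).sRel (0 : Fin 3) (2 : Fin 3) p) ↔
        (a = 1 ∨ a = m - 1))) := by
  have formula : ∀ a : ℕ, 1 ≤ a → a ≤ m - 1 → ∀ p : ℝ,
      (Multigraph.doubleBundle a (m - a)).sRel (0 : Fin 3) (2 : Fin 3) p =
        (1 - p) ^ a + (1 - p) ^ (m - a) - 2 * (1 - p) ^ m := by
    intro a ha1 ha2 p
    rw [Multigraph.sRel_db]
    have : a + (m - a) = m := by omega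
    rw [this]; ring
  -- the key comparison: for 1 ≤ b ≤ m-1, f(b) ≤ f(1)
  have fmax : ∀ b : ℕ, 1 ≤ b → b ≤ m - 1 → ∀ p : ℝ, 0 ≤ p → p ≤ 1 →
      (1-p) ^ b + (1-p) ^ (m - b) ≤ (1-p) + (1-p) ^ (m-1) := by
    intro b hb1 hb2 p hp0 hp1
    have hx0 : (0:ℝ) ≤ 1 - p := by linarith
    have hx1 : (1:ℝ) - p ≤ 1 := by linarith
    have h := pow_ineq hx0 hx1 (b-1) (m-b-1)
    have e1 : b - 1 + 1 = b := by omega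
    have e2 : m - b - 1 + 1 = m - b := by omega
    have e3 : b - 1 + (m - b - 1) + 1 = m - 1 := by omega
    rwa [e1, e2, e3] at h
  refine ⟨fun a ha1 ha2 p _ _ => formula a ha1 ha2 p, ?_, ?_⟩
  · intro a ha1 ha2 p hp0 hp1
    set x := 1 - p with hx
    have hx0 : 0 < x := by simp [hx]; linarith
    have hx1 : x < 1 := by simp [hx]; linarith
    have hlt : x ^ (m - a) < x ^ (a - 1) :=
      pow_lt_pow_right_of_lt_one₀ hx0 hx1 (by omega)
    have e1 : x ^ a = x ^ (a-1) * x := by rw [← pow_succ]; congr 1; omega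
    have e2 : x ^ (m - a + 1) = x ^ (m - a) * x := pow_succ x (m - a)
    nlinarith [hlt, hx0, hx1]
  · intro a ha1 ha2
    constructor
    · intro H
      by_contra hcon
      push_neg at hcon
      obtain ⟨hne1, hnem⟩ := hcon
      have hc : 1 ≤ a - 1 := by omega
      have hd : 1 ≤ m - a - 1 := by omega
      have key := pow_ineq_strict (x := (1:ℝ)/2) (by norm_num) (by norm_num) (a-1) (m-a-1) hc hd
      have e1 : a - 1 + 1 = a := by omega
      have e2 : m - a - 1 + 1 = m - a := by omega
      have e3 : a - 1 + (m - a - 1) + 1 = m - 1 := by omega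
      rw [e1, e2, e3] at key
      have h1 := H 1 le_rfl (by omega) (1/2) (by norm_num) (by norm_num)
      rw [formula a ha1 ha2, formula 1 le_rfl (by omega)] at h1
      have hhalf : (1:ℝ) - 1/2 = 1/2 := by norm_num
      rw [hhalf] at h1
      have em1 : m - 1 = m - 1 := rfl
      simp only [pow_one] at h1
      -- h1 : 1/2 + (1/2)^(m-1) - 2*(1/2)^m ≤ (1/2)^a + (1/2)^(m-a) - 2*(1/2)^m
      linarith [key, h1]
    · intro hor b hb1 hb2 p hp0 hp1
      rw [formula a ha1 ha2, formula b hb1 hb2]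
      have hfb := fmax b hb1 hb2 p hp0.le hp1.le
      have hfa : (1-p) + (1-p)^(m-1) = (1-p)^a + (1-p)^(m-a) := by
        rcases hor with rfl | rfl
        · rw [pow_one]
        · have : m - (m - 1) = 1 := by omega
          rw [this, pow_one]; ring
      linarith [hfb, hfa.le]
end
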